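/- arXiv:1308.5620 — 6 statements merged into one kernel-verified Lean document; each statement's English description precedes it below -/
import Mathlib

section
/- There exists an absolute constant c > 0 such that the following holds. Let f : ℝ → ℝ be a strictly convex function, and let A, C, D be finite nonempty subsets of ℝ with |C|·|D| ≥ |A|. Then |A + C| · |f(A) + D| ≥ c · |A|^{3/2} · (|C|·|D|)^{1/2}, where A + C = {a + c' : a ∈ A, c' ∈ C} and f(A) + D = {f(a) + d : a ∈ A, d ∈ D}. -/
open scoped Pointwise
open Finset

section Prelim
variable {f : ℝ → ℝ}

private lemma convex_pair
    (hf : ∀ x y : ℝ, x ≠ y → ∀ t : ℝ, 0 < t → t < 1 →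
      f (t * x + (1 - t) * y) < t * f x + (1 - t) * f y)
    {x x' u : ℝ} (hx : x < x') (hu : 0 < u) :
    f (x + u) - f x < f (x' + u) - f x' := by
  have hd : x < x' + u := by linarith
  have hne : x ≠ x' + u := ne_of_lt hd
  have hden : (0:ℝ) < x' + u - x := by linarith
  have hden' : x' + u - x ≠ 0 := ne_of_gt hden
  set t1 : ℝ := (x' - x) / (x' + u - x) with ht1
  set t2 : ℝ := u / (x' + u - x) with ht2
  have h1pos : 0 < t1 := div_pos (by linarith) hden
  have h2pos : 0 < t2 := div_pos hu hden
  have hsum : t1 + t2 = 1 := by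
    rw [ht1, ht2, ← add_div, div_eq_one_iff_eq hden']
    ring
  have e1 : t1 * x + (1 - t1) * (x' + u) = x + u := by
    rw [ht1]; field_simp; ring
  have e2 : t2 * x + (1 - t2) * (x' + u) = x' := by
    rw [ht2]; field_simp; ring
  have H1 := hf x (x' + u) hne t1 h1pos (by linarith)
  have H2 := hf x (x' + u) hne t2 h2pos (by linarith)
  rw [e1] at H1
  rw [e2] at H2
  have h12 : t2 = 1 - t1 := by linarith
  have hR : t1 * f x + (1 - t1) * f (x' + u) + (t2 * f x + (1 - t2) * f (x' + u))
      = f x + f (x' + u) := by rw [h12]; ring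
  linarith [add_lt_add H1 H2]

private lemma quasi
    (hf : ∀ x y : ℝ, x ≠ y → ∀ t : ℝ, 0 < t → t < 1 →
      f (t * x + (1 - t) * y) < t * f x + (1 - t) * f y)
    {a b c : ℝ} (h1 : a < b) (h2 : b < c) : f b < max (f a) (f c) := by
  have hden : (0:ℝ) < c - a := by linarith
  set t : ℝ := (c - b) / (c - a) with ht
  have htpos : 0 < t := div_pos (by linarith) hden
  have htlt : t < 1 := by
    rw [ht, div_lt_one hden]; linarith
  have H := hf a c (by intro h; linarith) t htpos htlt
  have e : t * a + (1 - t) * c = b := by rw [ht]; field_simp; ring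
  rw [e] at H
  have m1 : f a ≤ max (f a) (f c) := le_max_left _ _
  have m2 : f c ≤ max (f a) (f c) := le_max_right _ _
  nlinarith [mul_le_mul_of_nonneg_left m1 htpos.le,
    mul_le_mul_of_nonneg_left m2 (by linarith : (0:ℝ) ≤ 1 - t)]

private lemma curve_unique
    (hf : ∀ x y : ℝ, x ≠ y → ∀ t : ℝ, 0 < t → t < 1 →
      f (t * x + (1 - t) * y) < t * f x + (1 - t) * f y)
    {c c' d d' x x' : ℝ} (hxx : x ≠ x')
    (h1 : f (x - c) + d = f (x - c') + d')
    (h2 : f (x' - c) + d = f (x' - c') + d') :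
    c = c' ∧ d = d' := by
  have hc : c = c' := by
    by_contra hcc
    rcases lt_or_gt_of_ne hcc with h | h
    · -- c < c', u := c' - c > 0, w := z - c'
      rcases lt_or_gt_of_ne hxx with hx | hx
      · have H := convex_pair hf (show x - c' < x' - c' by linarith)
          (show (0:ℝ) < c' - c by linarith)
        rw [show x - c' + (c' - c) = x - c by ring,
            show x' - c' + (c' - c) = x' - c by ring] at H
        linarith
      · have H := convex_pair hf (show x' - c' < x - c' by linarith)
          (show (0:ℝ) < c' - c by linarith)
        rw [show x - c' + (c' - c) = x - c by ring,
            show x' - c' + (c' - c) = x' - c by ring] at H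
        linarith
    · rcases lt_or_gt_of_ne hxx with hx | hx
      · have H := convex_pair hf (show x - c < x' - c by linarith)
          (show (0:ℝ) < c - c' by linarith)
        rw [show x - c + (c - c') = x - c' by ring,
            show x' - c + (c - c') = x' - c' by ring] at H
        linarith
      · have H := convex_pair hf (show x' - c < x - c by linarith)
          (show (0:ℝ) < c - c' by linarith)
        rw [show x - c + (c - c') = x - c' by ring,
            show x' - c + (c - c') = x' - c' by ring] at H
        linarith
  refine ⟨hc, ?_⟩
  rw [hc] at h1
  linarith

end Prelim

section Split
variable {f : ℝ → ℝ}

private lemma split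
    (hf : ∀ x y : ℝ, x ≠ y → ∀ t : ℝ, 0 < t → t < 1 →
      f (t * x + (1 - t) * y) < t * f x + (1 - t) * f y)
    (A : Finset ℝ) (hA : A.Nonempty) :
    ∃ A' : Finset ℝ, A' ⊆ A ∧ A.card ≤ 2 * A'.card ∧ A'.Nonempty ∧
      (StrictMonoOn f ↑A' ∨ StrictAntiOn f ↑A') := by
  have hAf : (A.image f).Nonempty := hA.image f
  set m : ℝ := (A.image f).min' hAf with hm
  set B : Finset ℝ := A.filter (fun a => f a = m) with hB
  have hBne : B.Nonempty := by
    obtain ⟨y, hy⟩ := Finset.mem_image.mp ((A.image f).min'_mem hAf)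
    exact ⟨y, Finset.mem_filter.mpr ⟨hy.1, hy.2⟩⟩
  set a₀ : ℝ := B.min' hBne with ha₀
  have ha₀B : a₀ ∈ B := B.min'_mem hBne
  have ha₀A : a₀ ∈ A := (Finset.mem_filter.mp ha₀B).1
  have hfa₀ : f a₀ = m := (Finset.mem_filter.mp ha₀B).2
  have hmin : ∀ x ∈ A, f a₀ ≤ f x := by
    intro x hx
    rw [hfa₀]
    exact (A.image f).min'_le _ (Finset.mem_image_of_mem f hx)
  have hlt : ∀ x ∈ A, x < a₀ → f a₀ < f x := by
    intro x hx hxa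
    rcases lt_or_eq_of_le (hmin x hx) with h | h
    · exact h
    · exfalso
      have : x ∈ B := Finset.mem_filter.mpr ⟨hx, by rw [← h, hfa₀]⟩
      exact absurd (B.min'_le x this) (not_le.mpr hxa)
  set A₁ : Finset ℝ := A.filter (fun a => a ≤ a₀) with hA₁
  set A₂ : Finset ℝ := A.filter (fun a => ¬ a ≤ a₀) with hA₂
  have hcard : A₁.card + A₂.card = A.card := A.card_filter_add_card_filter_not _
  have hanti : StrictAntiOn f ↑A₁ := by
    intro x hx y hy hxy
    have hx' := Finset.mem_filter.mp (Finset.mem_coe.mp hx)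
    have hy' := Finset.mem_filter.mp (Finset.mem_coe.mp hy)
    rcases lt_or_eq_of_le hy'.2 with h | h
    · have hq := quasi hf hxy h
      rcases lt_max_iff.mp hq with h' | h'
      · exact h'
      · exact absurd (hmin y hy'.1) (not_le.mpr h')
    · rw [h]
      exact hlt x hx'.1 (by rw [← h]; exact lt_of_lt_of_le hxy le_rfl)
  have hmono : StrictMonoOn f ↑A₂ := by
    intro x hx y hy hxy
    have hx' := Finset.mem_filter.mp (Finset.mem_coe.mp hx)
    have hy' := Finset.mem_filter.mp (Finset.mem_coe.mp hy)
    have hx2 : a₀ < x := not_le.mp hx'.2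
    have hq := quasi hf hx2 hxy
    rcases lt_max_iff.mp hq with h' | h'
    · exact absurd (hmin x hx'.1) (not_le.mpr h')
    · exact h'
  rcases le_total A₁.card A₂.card with h | h
  · have hpos : 0 < A₁.card :=
      Finset.card_pos.mpr ⟨a₀, Finset.mem_filter.mpr ⟨ha₀A, le_rfl⟩⟩
    have h2 : A.card ≤ 2 * A₂.card := by omega
    refine ⟨A₂, A.filter_subset _, h2, ?_, Or.inl hmono⟩
    rw [← Finset.card_pos]
    omega
  · exact ⟨A₁, A.filter_subset _, by omega, ⟨a₀, Finset.mem_filter.mpr ⟨ha₀A, le_rfl⟩⟩, Or.inr hanti⟩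

end Split

section Rank

private noncomputable def rk (S : Finset ℝ) (x : ℝ) : ℕ := (S.filter (fun y => y < x)).card

private lemma rk_mono (S : Finset ℝ) {x y : ℝ} (h : x ≤ y) : rk S x ≤ rk S y := by
  apply Finset.card_le_card
  intro z hz
  have hz' := Finset.mem_filter.mp hz
  exact Finset.mem_filter.mpr ⟨hz'.1, lt_of_lt_of_le hz'.2 h⟩

private lemma rk_strict (S : Finset ℝ) {x y : ℝ} (hx : x ∈ S) (h : x < y) :
    rk S x < rk S y := by
  apply Finset.card_lt_card
  rw [Finset.ssubset_iff_of_subset]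
  · exact ⟨x, Finset.mem_filter.mpr ⟨hx, h⟩,
      fun hc => absurd (Finset.mem_filter.mp hc).2 (lt_irrefl x)⟩
  · intro z hz
    have hz' := Finset.mem_filter.mp hz
    exact Finset.mem_filter.mpr ⟨hz'.1, lt_trans hz'.2 h⟩

private lemma rk_le (S : Finset ℝ) {x : ℝ} (hx : x ∈ S) : rk S x ≤ S.card - 1 := by
  have hsub : S.filter (fun y => y < x) ⊆ S.erase x := by
    intro z hz
    have hz' := Finset.mem_filter.mp hz
    exact Finset.mem_erase.mpr ⟨ne_of_lt hz'.2, hz'.1⟩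
  have := Finset.card_le_card hsub
  rwa [Finset.card_erase_of_mem hx] at this

private lemma rk_injOn (S : Finset ℝ) {x y : ℝ} (hx : x ∈ S) (hy : y ∈ S)
    (h : rk S x = rk S y) : x = y := by
  by_contra hne
  rcases lt_or_gt_of_ne hne with h' | h'
  · exact absurd h (ne_of_lt (rk_strict S hx h'))
  · exact absurd h.symm (ne_of_lt (rk_strict S hy h'))

private lemma blk_fiber (S : Finset ℝ) (q b : ℕ) (hq : 0 < q) :
    (S.filter (fun x => rk S x / q = b)).card ≤ q := by
  have key : (S.filter (fun x => rk S x / q = b)).card ≤ (Finset.Ico (q*b) (q*b+q)).card := by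
    apply Finset.card_le_card_of_injOn (fun x => rk S x)
    · intro x hx
      have hx' := Finset.mem_filter.mp hx
      have h1 := Nat.div_add_mod (rk S x) q
      have h2 := Nat.mod_lt (rk S x) hq
      rw [hx'.2] at h1
      simp only [Finset.mem_coe, Finset.mem_Ico]
      omega
    · intro x hx y hy hxy
      exact rk_injOn S (Finset.mem_filter.mp (Finset.mem_coe.mp hx)).1
        (Finset.mem_filter.mp (Finset.mem_coe.mp hy)).1 hxy
  simpa using key

end Rank

section Stair

private lemma stair_mono (A' : Finset ℝ) (p q : ℝ → ℕ) (g₁ g₂ : ℕ)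
    (hp : ∀ a ∈ A', p a < g₁) (hq : ∀ a ∈ A', q a < g₂)
    (hmp : ∀ a ∈ A', ∀ b ∈ A', a ≤ b → p a ≤ p b)
    (hmq : ∀ a ∈ A', ∀ b ∈ A', a ≤ b → q a ≤ q b) :
    (A'.image (fun a => (p a, q a))).card ≤ g₁ + g₂ := by
  set ψ : ℝ → ℕ × ℕ := fun a => (p a, q a) with hψ
  have hinj : Set.InjOn (fun b : ℕ × ℕ => b.1 + b.2) ↑(A'.image ψ) := by
    intro b hb b' hb' hsum
    obtain ⟨a, ha, rfl⟩ := Finset.mem_image.mp (Finset.mem_coe.mp hb)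
    obtain ⟨a', ha', rfl⟩ := Finset.mem_image.mp (Finset.mem_coe.mp hb')
    rcases le_total a a' with h | h
    · have h1 := hmp a ha a' ha' h
      have h2 := hmq a ha a' ha' h
      simp only [hψ] at hsum ⊢
      simp only [Prod.mk.injEq]
      omega
    · have h1 := hmp a' ha' a ha h
      have h2 := hmq a' ha' a ha h
      simp only [hψ] at hsum ⊢
      simp only [Prod.mk.injEq]
      omega
  rw [← Finset.card_image_of_injOn hinj]
  have hsub : (A'.image ψ).image (fun b : ℕ × ℕ => b.1 + b.2) ⊆ Finset.range (g₁ + g₂) := by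
    intro z hz
    obtain ⟨b, hb, rfl⟩ := Finset.mem_image.mp hz
    obtain ⟨a, ha, rfl⟩ := Finset.mem_image.mp hb
    have := hp a ha
    have := hq a ha
    simp only [Finset.mem_range, hψ]
    omega
  simpa using Finset.card_le_card hsub

private lemma stair_anti (A' : Finset ℝ) (p q : ℝ → ℕ) (g₁ g₂ : ℕ)
    (hp : ∀ a ∈ A', p a < g₁) (hq : ∀ a ∈ A', q a < g₂)
    (hmp : ∀ a ∈ A', ∀ b ∈ A', a ≤ b → p a ≤ p b)
    (hmq : ∀ a ∈ A', ∀ b ∈ A', a ≤ b → q b ≤ q a) :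
    (A'.image (fun a => (p a, q a))).card ≤ g₁ + g₂ := by
  have hinj2 : Set.InjOn (fun b : ℕ × ℕ => (b.1, g₂ - 1 - b.2))
      ↑(A'.image (fun a => (p a, q a))) := by
    intro b hb b' hb' he
    obtain ⟨a, ha, rfl⟩ := Finset.mem_image.mp (Finset.mem_coe.mp hb)
    obtain ⟨a', ha', rfl⟩ := Finset.mem_image.mp (Finset.mem_coe.mp hb')
    have h1 := hq a ha
    have h2 := hq a' ha'
    simp only [Prod.mk.injEq] at he ⊢
    omega
  have hcard : (A'.image (fun a => (p a, q a))).card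
      = (A'.image (fun a => (p a, g₂ - 1 - q a))).card := by
    have him : A'.image (fun a => (p a, g₂ - 1 - q a))
        = (A'.image (fun a => (p a, q a))).image (fun b => (b.1, g₂ - 1 - b.2)) := by
      rw [Finset.image_image]
      rfl
    rw [him, Finset.card_image_of_injOn hinj2]
  rw [hcard]
  apply stair_mono A' p _ g₁ g₂ hp
  · intro a ha; have := hq a ha; omega
  · exact hmp
  · intro a ha b hb hab
    have := hmq a ha b hb hab
    omega

end Stair

private lemma nat_cs {α : Type*} [DecidableEq α] (s : Finset α) (k : α → ℕ) :
    (∑ b ∈ s, k b)^2 ≤ s.card * ∑ b ∈ s, (k b)^2 := by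
  have h1 := sq_sum_le_card_mul_sum_sq (s := s) (f := fun b => (k b : ℝ))
  have h2 : ((∑ b ∈ s, k b : ℕ) : ℝ)^2 ≤ ((s.card * ∑ b ∈ s, (k b)^2 : ℕ) : ℝ) := by
    push_cast
    exact h1
  exact_mod_cast h2

set_option maxHeartbeats 1000000 in
/-- (Elekes–Nathanson–Ruzsa) For a strictly convex function `f` and finite sets
`A, C, D ⊆ ℝ` with `|C||D| ≥ |A|`, one has
`|A + C| · |f(A) + D| = Ω(|A|^(3/2) (|C||D|)^(1/2))`. -/
theorem elekes_nathanson_ruzsa :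
    ∃ c : ℝ, 0 < c ∧
      ∀ f : ℝ → ℝ,
        (∀ x y : ℝ, x ≠ y → ∀ t : ℝ, 0 < t → t < 1 →
          f (t * x + (1 - t) * y) < t * f x + (1 - t) * f y) →
      ∀ A C D : Finset ℝ, A.Nonempty → C.Nonempty → D.Nonempty →
        (A.card : ℝ) ≤ (C.card : ℝ) * (D.card : ℝ) →
        c * (A.card : ℝ) ^ ((3 : ℝ) / 2) * ((C.card : ℝ) * (D.card : ℝ)) ^ ((1 : ℝ) / 2) ≤
          ((A + C).card : ℝ) * ((A.image f + D).card : ℝ) := by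
  refine ⟨1/1024, by norm_num, ?_⟩
  intro f hf A C D hA hC hD hN
  set S : Finset ℝ := A + C with hSdef
  set T : Finset ℝ := A.image f + D with hTdef
  -- rewrite the rpow's as square roots
  have hcastA : (0:ℝ) ≤ (A.card:ℝ) := Nat.cast_nonneg _
  have hcastCD : (0:ℝ) ≤ (C.card:ℝ) * (D.card:ℝ) := by positivity
  have hr1 : (A.card : ℝ) ^ ((3 : ℝ) / 2) = Real.sqrt ((A.card:ℝ)^3) := by
    rw [Real.sqrt_eq_rpow, ← Real.rpow_natCast ((A.card:ℝ)) 3, ← Real.rpow_mul hcastA]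
    norm_num
  have hr2 : ((C.card : ℝ) * (D.card:ℝ)) ^ ((1 : ℝ) / 2)
      = Real.sqrt ((C.card:ℝ) * (D.card:ℝ)) := (Real.sqrt_eq_rpow _).symm
  rw [hr1, hr2]
  have hstnonneg : (0:ℝ) ≤ (S.card:ℝ) * (T.card:ℝ) := by positivity
  have hsA : A.card ≤ S.card := Finset.card_le_card_add_right hC
  have hsC : C.card ≤ S.card := Finset.card_le_card_add_left hA
  have htD : D.card ≤ T.card := Finset.card_le_card_add_left (hA.image f)
  have htpos : 0 < T.card := Finset.card_pos.mpr ((hA.image f).add hD)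
  by_cases hbig : ((A.card:ℝ))^3 ≤ (C.card:ℝ) * (D.card:ℝ)
  · -- |C||D| ≥ |A|^3 : trivial bound |S||T| ≥ |C||D| suffices
    have h1 : Real.sqrt ((A.card:ℝ)^3) ≤ Real.sqrt ((C.card:ℝ)*(D.card:ℝ)) :=
      Real.sqrt_le_sqrt hbig
    have h2 : (C.card:ℝ) * (D.card:ℝ) ≤ (S.card:ℝ) * (T.card:ℝ) := by
      have := Nat.mul_le_mul hsC htD
      exact_mod_cast this
    have h3 : Real.sqrt ((C.card:ℝ)*(D.card:ℝ)) * Real.sqrt ((C.card:ℝ)*(D.card:ℝ))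
        = (C.card:ℝ)*(D.card:ℝ) := Real.mul_self_sqrt hcastCD
    nlinarith [Real.sqrt_nonneg ((A.card:ℝ)^3), Real.sqrt_nonneg ((C.card:ℝ)*(D.card:ℝ)),
      mul_le_mul_of_nonneg_right h1 (Real.sqrt_nonneg ((C.card:ℝ)*(D.card:ℝ)))]
  · push_neg at hbig
    by_cases hsmall : A.card < 16
    · -- small |A| : trivial bound |S||T| ≥ |A| suffices
      have h1 : Real.sqrt ((C.card:ℝ)*(D.card:ℝ)) ≤ Real.sqrt ((A.card:ℝ)^3) :=
        Real.sqrt_le_sqrt (le_of_lt hbig)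
      have h2 : Real.sqrt ((A.card:ℝ)^3) * Real.sqrt ((A.card:ℝ)^3) = (A.card:ℝ)^3 :=
        Real.mul_self_sqrt (by positivity)
      have h3 : (A.card:ℝ) ≤ (S.card:ℝ) * (T.card:ℝ) := by
        have : A.card ≤ S.card * T.card :=
          le_trans hsA (Nat.le_mul_of_pos_right _ htpos)
        exact_mod_cast this
      have h4 : (A.card:ℝ) ≤ 15 := by
        have : A.card ≤ 15 := by omega
        exact_mod_cast this
      have h5 : ((A.card:ℝ))^3 ≤ 225 * (A.card:ℝ) := by
        nlinarith [mul_nonneg (mul_nonneg (sub_nonneg.mpr h4) hcastA)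
          (by linarith : (0:ℝ) ≤ (A.card:ℝ) + 15)]
      have h6 : Real.sqrt ((A.card:ℝ)^3) * Real.sqrt ((C.card:ℝ)*(D.card:ℝ))
          ≤ Real.sqrt ((A.card:ℝ)^3) * Real.sqrt ((A.card:ℝ)^3) :=
        mul_le_mul_of_nonneg_left h1 (Real.sqrt_nonneg _)
      rw [h2] at h6
      linarith
    · -- main case
      push_neg at hsmall
      obtain ⟨A', hsub, hhalf, hA'ne, hmode⟩ := split hf A hA
      have hn'8 : 8 ≤ A'.card := by omega
      have hn'pos : 0 < A'.card := by omega
      have hfinj : Set.InjOn f ↑A' := by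
        rcases hmode with hm | hm
        · exact hm.injOn
        · exact hm.injOn
      have htn' : A'.card ≤ T.card := by
        calc A'.card = (A'.image f).card := (Finset.card_image_of_injOn hfinj).symm
          _ ≤ (A.image f).card := Finset.card_le_card (Finset.image_subset_image hsub)
          _ ≤ T.card := Finset.card_le_card_add_right hD
      have hsn' : A'.card ≤ S.card := le_trans (Finset.card_le_card hsub) hsA
      set n' := A'.card with hn'def
      set q1 := 4 * S.card / n' + 1 with hq1def
      set q2 := 4 * T.card / n' + 1 with hq2def
      have hq1pos : 0 < q1 := Nat.succ_pos _
      have hq2pos : 0 < q2 := Nat.succ_pos _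
      set u : ℝ → ℕ := fun x => rk S x / q1 with hudef
      set v : ℝ → ℕ := fun y => rk T y / q2 with hvdef
      set g1 := (S.card - 1) / q1 + 1 with hg1def
      set g2 := (T.card - 1) / q2 + 1 with hg2def
      set G := g1 + g2 with hGdef
      have hu_lt : ∀ x ∈ S, u x < g1 := by
        intro x hx
        have h2 : rk S x / q1 ≤ (S.card - 1) / q1 := Nat.div_le_div_right (rk_le S hx)
        exact lt_of_le_of_lt h2 (by rw [hg1def]; exact Nat.lt_succ_self _)
      have hv_lt : ∀ y ∈ T, v y < g2 := by
        intro y hy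
        have h2 : rk T y / q2 ≤ (T.card - 1) / q2 := Nat.div_le_div_right (rk_le T hy)
        exact lt_of_le_of_lt h2 (by rw [hg2def]; exact Nat.lt_succ_self _)
      have hu_mono : ∀ x y : ℝ, x ≤ y → u x ≤ u y := by
        intro x y h
        exact Nat.div_le_div_right (rk_mono S h)
      have hv_mono : ∀ x y : ℝ, x ≤ y → v x ≤ v y := by
        intro x y h
        exact Nat.div_le_div_right (rk_mono T h)
      -- per-curve lower bound
      have key : ∀ c ∈ C, ∀ d ∈ D,
          n'^2 ≤ G * (((A' ×ˢ A').filter (fun p : ℝ × ℝ => p.1 ≠ p.2 ∧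
            u (p.2 + c) = u (p.1 + c) ∧ v (f p.2 + d) = v (f p.1 + d))).card + n') := by
        intro c hc d hd
        set ψ : ℝ → ℕ × ℕ := fun a => (u (a + c), v (f a + d)) with hψdef
        have hψmem : ∀ a ∈ A', (a + c) ∈ S ∧ (f a + d) ∈ T := by
          intro a ha
          exact ⟨Finset.add_mem_add (hsub ha) hc,
            Finset.add_mem_add (Finset.mem_image_of_mem f (hsub ha)) hd⟩
        have hIG : (A'.image ψ).card ≤ G := by
          rw [hGdef]
          rcases hmode with hm | hm
          · apply stair_mono A' (fun a => u (a + c)) (fun a => v (f a + d)) g1 g2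
            · intro a ha; exact hu_lt _ (hψmem a ha).1
            · intro a ha; exact hv_lt _ (hψmem a ha).2
            · intro a ha b hb hab; exact hu_mono _ _ (by linarith)
            · intro a ha b hb hab
              rcases eq_or_lt_of_le hab with h | h
              · rw [h]
              · exact hv_mono _ _ (by
                  have := hm (Finset.mem_coe.mpr ha) (Finset.mem_coe.mpr hb) h
                  linarith)
          · apply stair_anti A' (fun a => u (a + c)) (fun a => v (f a + d)) g1 g2
            · intro a ha; exact hu_lt _ (hψmem a ha).1
            · intro a ha; exact hv_lt _ (hψmem a ha).2
            · intro a ha b hb hab; exact hu_mono _ _ (by linarith)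
            · intro a ha b hb hab
              rcases eq_or_lt_of_le hab with h | h
              · rw [h]
              · exact hv_mono _ _ (by
                  have := hm (Finset.mem_coe.mpr ha) (Finset.mem_coe.mpr hb) h
                  linarith)
        have h1 : ∑ b ∈ A'.image ψ, (A'.filter (fun a => ψ a = b)).card = n' :=
          (Finset.card_eq_sum_card_image ψ A').symm
        have h2 : n'^2 ≤ (A'.image ψ).card *
            ∑ b ∈ A'.image ψ, ((A'.filter (fun a => ψ a = b)).card)^2 := by
          rw [← h1]
          exact nat_cs _ _
        have h4 : ∑ b ∈ A'.image ψ, ((A'.filter (fun a => ψ a = b)).card)^2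
            = ((A' ×ˢ A').filter (fun p : ℝ × ℝ => ψ p.2 = ψ p.1)).card := by
          have e1 : ((A' ×ˢ A').filter (fun p : ℝ × ℝ => ψ p.2 = ψ p.1)).card
              = ∑ a ∈ A', (A'.filter (fun a' => ψ a' = ψ a)).card := by
            rw [Finset.card_filter, Finset.sum_product]
            exact Finset.sum_congr rfl fun a _ => (Finset.card_filter _ _).symm
          have e2 : ∑ a ∈ A', (A'.filter (fun a' => ψ a' = ψ a)).card
              = ∑ b ∈ A'.image ψ, (A'.filter (fun a => ψ a = b)).card
                  • (A'.filter (fun a' => ψ a' = b)).card :=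
            Finset.sum_comp (fun b => (A'.filter (fun a' => ψ a' = b)).card) ψ
          rw [e1, e2]
          exact Finset.sum_congr rfl fun b _ => by rw [smul_eq_mul, sq]
        have h5 : ((A' ×ˢ A').filter (fun p : ℝ × ℝ => ψ p.2 = ψ p.1)).card
            ≤ ((A' ×ˢ A').filter (fun p : ℝ × ℝ => p.1 ≠ p.2 ∧
                u (p.2 + c) = u (p.1 + c) ∧ v (f p.2 + d) = v (f p.1 + d))).card + n' := by
          have hsplit := Finset.card_filter_add_card_filter_not
            (s := (A' ×ˢ A').filter (fun p : ℝ × ℝ => ψ p.2 = ψ p.1))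
            (p := fun p : ℝ × ℝ => p.1 = p.2)
          have hdiag : (((A' ×ˢ A').filter (fun p : ℝ × ℝ => ψ p.2 = ψ p.1)).filter
              (fun p : ℝ × ℝ => p.1 = p.2)).card ≤ n' := by
            apply Finset.card_le_card_of_injOn (fun p => p.1)
            · intro p hp
              have := Finset.mem_filter.mp (Finset.mem_filter.mp hp).1
              exact (Finset.mem_product.mp this.1).1
            · intro p hp p' hp' he
              have h1 := (Finset.mem_filter.mp (Finset.mem_coe.mp hp)).2
              have h2 := (Finset.mem_filter.mp (Finset.mem_coe.mp hp')).2
              exact Prod.ext he (by rw [← h1, ← h2]; exact he)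
          have hoff : (((A' ×ˢ A').filter (fun p : ℝ × ℝ => ψ p.2 = ψ p.1)).filter
              (fun p : ℝ × ℝ => ¬ p.1 = p.2)).card
              ≤ ((A' ×ˢ A').filter (fun p : ℝ × ℝ => p.1 ≠ p.2 ∧
                u (p.2 + c) = u (p.1 + c) ∧ v (f p.2 + d) = v (f p.1 + d))).card := by
            apply Finset.card_le_card
            intro p hp
            have h1 := Finset.mem_filter.mp hp
            have h2 := Finset.mem_filter.mp h1.1
            have h3 : ψ p.2 = ψ p.1 := h2.2
            rw [hψdef] at h3
            simp only [Prod.mk.injEq] at h3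
            exact Finset.mem_filter.mpr ⟨h2.1, h1.2, h3.1, h3.2⟩
          omega
        calc n'^2 ≤ (A'.image ψ).card *
            ∑ b ∈ A'.image ψ, ((A'.filter (fun a => ψ a = b)).card)^2 := h2
          _ ≤ G * ∑ b ∈ A'.image ψ, ((A'.filter (fun a => ψ a = b)).card)^2 :=
            Nat.mul_le_mul_right _ hIG
          _ = G * ((A' ×ˢ A').filter (fun p : ℝ × ℝ => ψ p.2 = ψ p.1)).card := by rw [h4]
          _ ≤ _ := Nat.mul_le_mul_left _ h5
      -- global counting
      set Wp : ℝ × ℝ → ℕ := fun p => ((A' ×ˢ A').filter (fun w : ℝ × ℝ => w.1 ≠ w.2 ∧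
        u (w.2 + p.1) = u (w.1 + p.1) ∧ v (f w.2 + p.2) = v (f w.1 + p.2))).card with hWpdef
      set Wtot := ((C ×ˢ D) ×ˢ (A' ×ˢ A')).filter
        (fun z : (ℝ × ℝ) × ℝ × ℝ => z.2.1 ≠ z.2.2 ∧
          u (z.2.2 + z.1.1) = u (z.2.1 + z.1.1) ∧
          v (f z.2.2 + z.1.2) = v (f z.2.1 + z.1.2)) with hWtotdef
      have hWtot : Wtot.card = ∑ p ∈ C ×ˢ D, Wp p := by
        rw [hWtotdef, Finset.card_filter, Finset.sum_product]
        exact Finset.sum_congr rfl fun p _ => (Finset.card_filter _ _).symm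
      have hlow : C.card * D.card * n'^2 ≤ G * Wtot.card + G * (C.card * D.card * n') := by
        have step : ∑ _p ∈ C ×ˢ D, n'^2 ≤ ∑ p ∈ C ×ˢ D, G * (Wp p + n') := by
          apply Finset.sum_le_sum
          intro p hp
          have hp' := Finset.mem_product.mp hp
          exact key p.1 hp'.1 p.2 hp'.2
        rw [Finset.sum_const, Finset.card_product, smul_eq_mul] at step
        have e : ∑ p ∈ C ×ˢ D, G * (Wp p + n')
            = G * Wtot.card + G * (C.card * D.card * n') := by
          calc ∑ p ∈ C ×ˢ D, G * (Wp p + n')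
              = G * ∑ p ∈ C ×ˢ D, (Wp p + n') := (Finset.mul_sum _ _ _).symm
            _ = G * (∑ p ∈ C ×ˢ D, Wp p + C.card * D.card * n') := by
                rw [Finset.sum_add_distrib, Finset.sum_const, Finset.card_product, smul_eq_mul]
            _ = G * Wtot.card + G * (C.card * D.card * n') := by rw [← hWtot, mul_add]
        rw [e] at step
        exact step
      -- upper bound for Wtot via injection into same-cell pairs of the grid
      set R := ((S ×ˢ T) ×ˢ (S ×ˢ T)).filter
        (fun z : (ℝ × ℝ) × ℝ × ℝ => u z.2.1 = u z.1.1 ∧ v z.2.2 = v z.1.2) with hRdef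
      have hWR : Wtot.card ≤ R.card := by
        apply Finset.card_le_card_of_injOn
          (fun z : (ℝ × ℝ) × ℝ × ℝ =>
            ((z.2.1 + z.1.1, f z.2.1 + z.1.2), (z.2.2 + z.1.1, f z.2.2 + z.1.2)))
        · intro z hz
          have hz' := Finset.mem_filter.mp hz
          have hz1 := Finset.mem_product.mp hz'.1
          have hcd := Finset.mem_product.mp hz1.1
          have hab := Finset.mem_product.mp hz1.2
          refine Finset.mem_filter.mpr ⟨?_, hz'.2.2.1, hz'.2.2.2⟩
          refine Finset.mem_product.mpr ⟨?_, ?_⟩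
          · exact Finset.mem_product.mpr ⟨Finset.add_mem_add (hsub hab.1) hcd.1,
              Finset.add_mem_add (Finset.mem_image_of_mem f (hsub hab.1)) hcd.2⟩
          · exact Finset.mem_product.mpr ⟨Finset.add_mem_add (hsub hab.2) hcd.1,
              Finset.add_mem_add (Finset.mem_image_of_mem f (hsub hab.2)) hcd.2⟩
        · intro z hz z' hz' he
          have hzm := Finset.mem_filter.mp (Finset.mem_coe.mp hz)
          have hz'm := Finset.mem_filter.mp (Finset.mem_coe.mp hz')
          simp only [Prod.mk.injEq] at he
          obtain ⟨⟨e1, e2⟩, e3, e4⟩ := he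
          have hne : z.2.1 ≠ z.2.2 := hzm.2.1
          have hxx : z.2.1 + z.1.1 ≠ z.2.2 + z.1.1 := by
            intro hcon
            exact hne (by linarith [add_right_cancel hcon])
          have harg1 : z.2.1 + z.1.1 - z.1.1 = z.2.1 := by ring
          have harg2 : z.2.1 + z.1.1 - z'.1.1 = z'.2.1 := by linarith
          have harg3 : z.2.2 + z.1.1 - z.1.1 = z.2.2 := by ring
          have harg4 : z.2.2 + z.1.1 - z'.1.1 = z'.2.2 := by linarith
          have hcu := curve_unique hf hxx
            (c := z.1.1) (c' := z'.1.1) (d := z.1.2) (d' := z'.1.2)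
            (by rw [harg1, harg2]; exact e2)
            (by rw [harg3, harg4]; exact e4)
          obtain ⟨hcc, hdd⟩ := hcu
          have ha : z.2.1 = z'.2.1 := by rw [hcc] at e1; linarith
          have hb : z.2.2 = z'.2.2 := by rw [hcc] at e3; linarith
          exact Prod.ext (Prod.ext hcc hdd) (Prod.ext ha hb)
      have hRcard : R.card ≤ S.card * T.card * (q1 * q2) := by
        have e1 : R.card = ∑ x ∈ S ×ˢ T,
            ((S ×ˢ T).filter (fun y : ℝ × ℝ => u y.1 = u x.1 ∧ v y.2 = v x.2)).card := by
          rw [hRdef, Finset.card_filter, Finset.sum_product]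
          exact Finset.sum_congr rfl fun x _ => (Finset.card_filter _ _).symm
        rw [e1]
        calc ∑ x ∈ S ×ˢ T,
            ((S ×ˢ T).filter (fun y : ℝ × ℝ => u y.1 = u x.1 ∧ v y.2 = v x.2)).card
            ≤ ∑ _x ∈ S ×ˢ T, q1 * q2 := by
              apply Finset.sum_le_sum
              intro x hx
              have hsubset : (S ×ˢ T).filter (fun y : ℝ × ℝ => u y.1 = u x.1 ∧ v y.2 = v x.2)
                  ⊆ (S.filter (fun w => u w = u x.1)) ×ˢ (T.filter (fun w => v w = v x.2)) := by
                intro y hy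
                have h := Finset.mem_filter.mp hy
                have h2 := Finset.mem_product.mp h.1
                exact Finset.mem_product.mpr ⟨Finset.mem_filter.mpr ⟨h2.1, h.2.1⟩,
                  Finset.mem_filter.mpr ⟨h2.2, h.2.2⟩⟩
              calc ((S ×ˢ T).filter (fun y : ℝ × ℝ => u y.1 = u x.1 ∧ v y.2 = v x.2)).card
                  ≤ ((S.filter (fun w => u w = u x.1)) ×ˢ (T.filter (fun w => v w = v x.2))).card :=
                    Finset.card_le_card hsubset
                _ = (S.filter (fun w => u w = u x.1)).card * (T.filter (fun w => v w = v x.2)).card :=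
                    Finset.card_product _ _
                _ ≤ q1 * q2 := Nat.mul_le_mul (blk_fiber S q1 (u x.1) hq1pos)
                    (blk_fiber T q2 (v x.2) hq2pos)
          _ = S.card * T.card * (q1 * q2) := by
              rw [Finset.sum_const, Finset.card_product, smul_eq_mul]
      -- combine the counting bounds (ℕ)
      have hmainN : C.card * D.card * n'^2
          ≤ G * (S.card * T.card * (q1 * q2)) + G * (C.card * D.card * n') := by
        calc C.card * D.card * n'^2
            ≤ G * Wtot.card + G * (C.card * D.card * n') := hlow
          _ ≤ G * R.card + G * (C.card * D.card * n') :=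
              Nat.add_le_add_right (Nat.mul_le_mul_left _ hWR) _
          _ ≤ G * (S.card * T.card * (q1 * q2)) + G * (C.card * D.card * n') :=
              Nat.add_le_add_right (Nat.mul_le_mul_left _ hRcard) _
      -- numeric bounds on the parameters (ℕ)
      have hq1n : q1 * n' ≤ 5 * S.card := by
        have d := Nat.div_mul_le_self (4 * S.card) n'
        have e : q1 * n' = (4 * S.card / n') * n' + n' := by rw [hq1def]; ring
        omega
      have hq2n : q2 * n' ≤ 5 * T.card := by
        have d := Nat.div_mul_le_self (4 * T.card) n'
        have e : q2 * n' = (4 * T.card / n') * n' + n' := by rw [hq2def]; ring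
        omega
      have hlt1N : 4 * S.card < q1 * n' := by
        have h1 := Nat.div_add_mod (4 * S.card) n'
        have h2 := Nat.mod_lt (4 * S.card) hn'pos
        have e : q1 * n' = n' * (4 * S.card / n') + n' := by rw [hq1def]; ring
        omega
      have hlt2N : 4 * T.card < q2 * n' := by
        have h1 := Nat.div_add_mod (4 * T.card) n'
        have h2 := Nat.mod_lt (4 * T.card) hn'pos
        have e : q2 * n' = n' * (4 * T.card / n') + n' := by rw [hq2def]; ring
        omega
      have hx1 : 4 * ((S.card - 1) / q1) < n' := by
        by_contra hcon
        push_neg at hcon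
        set x1 := (S.card - 1) / q1 with hx1def
        have t0 : x1 * q1 ≤ S.card - 1 := Nat.div_mul_le_self _ _
        have t1 : n' * S.card ≤ 4 * x1 * S.card := Nat.mul_le_mul_right _ hcon
        have t2 : x1 * (4 * S.card) ≤ x1 * (q1 * n') :=
          Nat.mul_le_mul_left _ (le_of_lt hlt1N)
        have t3 : x1 * (q1 * n') = (x1 * q1) * n' := by ring
        have t4 : (x1 * q1) * n' ≤ (S.card - 1) * n' := Nat.mul_le_mul_right _ t0
        have t5 : (S.card - 1) * n' + n' = S.card * n' := by
          have h := Nat.sub_mul S.card 1 n'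
          have h2 : 1 * n' ≤ S.card * n' := Nat.mul_le_mul_right n' (by omega)
          omega
        have t6 : 4 * x1 * S.card = x1 * (4 * S.card) := by ring
        have t7 : S.card * n' = n' * S.card := by ring
        omega
      have hx2 : 4 * ((T.card - 1) / q2) < n' := by
        by_contra hcon
        push_neg at hcon
        set x2 := (T.card - 1) / q2 with hx2def
        have t0 : x2 * q2 ≤ T.card - 1 := Nat.div_mul_le_self _ _
        have t1 : n' * T.card ≤ 4 * x2 * T.card := Nat.mul_le_mul_right _ hcon
        have t2 : x2 * (4 * T.card) ≤ x2 * (q2 * n') :=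
          Nat.mul_le_mul_left _ (le_of_lt hlt2N)
        have t3 : x2 * (q2 * n') = (x2 * q2) * n' := by ring
        have t4 : (x2 * q2) * n' ≤ (T.card - 1) * n' := Nat.mul_le_mul_right _ t0
        have t5 : (T.card - 1) * n' + n' = T.card * n' := by
          have h := Nat.sub_mul T.card 1 n'
          have h2 : 1 * n' ≤ T.card * n' := Nat.mul_le_mul_right n' (by omega)
          omega
        have t6 : 4 * x2 * T.card = x2 * (4 * T.card) := by ring
        have t7 : T.card * n' = n' * T.card := by ring
        omega
      have hGn : 4 * G ≤ 3 * n' := by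
        have e : G = (S.card - 1) / q1 + 1 + ((T.card - 1) / q2 + 1) := by
          rw [hGdef, hg1def, hg2def]
        omega
      -- discard the heavy combinatorial context before the real-number endgame
      clear hWR hRcard hlow hWtot key hu_lt hv_lt hu_mono hv_mono
      clear_value Wtot R Wp u v
      clear hWtotdef hRdef hWpdef hudef hvdef Wtot R Wp u v
      clear hx1 hx2 hlt1N hlt2N hq1pos hq2pos
      clear_value q1 q2 g1 g2 G n'
      clear hq1def hq2def hg1def hg2def hGdef g1 g2
      -- pass to real numbers
      have hn'posR : (0:ℝ) < (n':ℝ) := by exact_mod_cast hn'pos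
      have F0 : (C.card:ℝ) * (D.card:ℝ) * (n':ℝ)^2
          ≤ (G:ℝ) * ((S.card:ℝ) * (T.card:ℝ) * ((q1:ℝ) * (q2:ℝ)))
            + (G:ℝ) * ((C.card:ℝ) * (D.card:ℝ) * (n':ℝ)) := by exact_mod_cast hmainN
      have F1 : (q1:ℝ) * (n':ℝ) ≤ 5 * (S.card:ℝ) := by exact_mod_cast hq1n
      have F2 : (q2:ℝ) * (n':ℝ) ≤ 5 * (T.card:ℝ) := by exact_mod_cast hq2n
      have F3 : 4 * (G:ℝ) ≤ 3 * (n':ℝ) := by exact_mod_cast hGn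
      have F4 : (A.card:ℝ) ≤ 2 * (n':ℝ) := by exact_mod_cast hhalf
      have K1 := mul_le_mul_of_nonneg_right F0 (sq_nonneg (n':ℝ))
      have hGle : (G:ℝ) ≤ 3/4*(n':ℝ) := by linarith
      have hXnn : (0:ℝ) ≤ (S.card:ℝ)*(T.card:ℝ) := hstnonneg
      have hq1nn : (0:ℝ) ≤ (q1:ℝ)*(n':ℝ) :=
        mul_nonneg (Nat.cast_nonneg _) (Nat.cast_nonneg _)
      have hq2nn : (0:ℝ) ≤ (q2:ℝ)*(n':ℝ) :=
        mul_nonneg (Nat.cast_nonneg _) (Nat.cast_nonneg _)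
      have K2 : (G:ℝ) * ((S.card:ℝ)*(T.card:ℝ)) * (((q1:ℝ)*(n':ℝ)) * ((q2:ℝ)*(n':ℝ)))
          ≤ (3/4*(n':ℝ)) * ((S.card:ℝ)*(T.card:ℝ)) * ((5*(S.card:ℝ)) * (5*(T.card:ℝ))) := by
        have h_a : (G:ℝ) * ((S.card:ℝ)*(T.card:ℝ)) ≤ (3/4*(n':ℝ)) * ((S.card:ℝ)*(T.card:ℝ)) :=
          mul_le_mul_of_nonneg_right hGle hXnn
        have h_b : ((q1:ℝ)*(n':ℝ)) * ((q2:ℝ)*(n':ℝ)) ≤ (5*(S.card:ℝ)) * (5*(T.card:ℝ)) :=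
          mul_le_mul F1 F2 hq2nn (by
            have : (0:ℝ) ≤ (S.card:ℝ) := Nat.cast_nonneg _
            linarith)
        exact mul_le_mul h_a h_b (mul_nonneg hq1nn hq2nn)
          (mul_nonneg (by linarith) hXnn)
      have K3 : (G:ℝ) * ((C.card:ℝ)*(D.card:ℝ)*(n':ℝ)) * (n':ℝ)^2
          ≤ (3/4*(n':ℝ)) * ((C.card:ℝ)*(D.card:ℝ)*(n':ℝ)) * (n':ℝ)^2 := by
        apply mul_le_mul_of_nonneg_right _ (sq_nonneg _)
        apply mul_le_mul_of_nonneg_right hGle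
        exact mul_nonneg hcastCD (Nat.cast_nonneg _)
      have K4 : (C.card:ℝ)*(D.card:ℝ)*(n':ℝ)^4
          ≤ 75/4*(n':ℝ)*((S.card:ℝ)*(T.card:ℝ))^2
            + 3/4*((C.card:ℝ)*(D.card:ℝ)*(n':ℝ)^4) := by nlinarith [K1, K2, K3]
      have K5 : (C.card:ℝ)*(D.card:ℝ)*(n':ℝ)^4 ≤ 75*(n':ℝ)*((S.card:ℝ)*(T.card:ℝ))^2 := by
        linarith
      have K6 : (C.card:ℝ)*(D.card:ℝ)*(n':ℝ)^3 ≤ 75*((S.card:ℝ)*(T.card:ℝ))^2 := by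
        apply le_of_mul_le_mul_right _ hn'posR
        calc (C.card:ℝ)*(D.card:ℝ)*(n':ℝ)^3*(n':ℝ)
            = (C.card:ℝ)*(D.card:ℝ)*(n':ℝ)^4 := by ring
          _ ≤ 75*(n':ℝ)*((S.card:ℝ)*(T.card:ℝ))^2 := K5
          _ = 75*((S.card:ℝ)*(T.card:ℝ))^2*(n':ℝ) := by ring
      have h8 : (A.card:ℝ)^3 ≤ (2*(n':ℝ))^3 := pow_le_pow_left₀ hcastA F4 3
      have K7 : (A.card:ℝ)^3*((C.card:ℝ)*(D.card:ℝ)) ≤ 600*((S.card:ℝ)*(T.card:ℝ))^2 := by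
        nlinarith [mul_le_mul_of_nonneg_right h8 hcastCD, K6]
      -- final square-root manipulation
      have hs1 : Real.sqrt ((A.card:ℝ)^3) * Real.sqrt ((C.card:ℝ)*(D.card:ℝ))
          = Real.sqrt ((A.card:ℝ)^3*((C.card:ℝ)*(D.card:ℝ))) :=
        (Real.sqrt_mul (by positivity) _).symm
      have hs2 : Real.sqrt ((A.card:ℝ)^3*((C.card:ℝ)*(D.card:ℝ)))
          ≤ Real.sqrt (600*((S.card:ℝ)*(T.card:ℝ))^2) := Real.sqrt_le_sqrt K7
      have hs3 : Real.sqrt (600*((S.card:ℝ)*(T.card:ℝ))^2)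
          = Real.sqrt 600 * ((S.card:ℝ)*(T.card:ℝ)) := by
        rw [Real.sqrt_mul (by norm_num : (0:ℝ) ≤ 600), Real.sqrt_sq hstnonneg]
      have hs4 : Real.sqrt 600 ≤ 25 := by
        have h6 : Real.sqrt 600 ≤ Real.sqrt 625 := Real.sqrt_le_sqrt (by norm_num)
        have h7 : Real.sqrt 625 = 25 := by
          rw [show (625:ℝ) = 25^2 by norm_num, Real.sqrt_sq (by norm_num : (0:ℝ) ≤ 25)]
        linarith
      have hs5 : Real.sqrt 600 * ((S.card:ℝ)*(T.card:ℝ)) ≤ 25*((S.card:ℝ)*(T.card:ℝ)) :=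
        mul_le_mul_of_nonneg_right hs4 hstnonneg
      calc 1/1024 * Real.sqrt ((A.card:ℝ)^3) * Real.sqrt ((C.card:ℝ)*(D.card:ℝ))
          = 1/1024 * (Real.sqrt ((A.card:ℝ)^3) * Real.sqrt ((C.card:ℝ)*(D.card:ℝ))) := by
            ring
        _ ≤ (S.card:ℝ)*(T.card:ℝ) := by
            rw [hs1]
            linarith
end

section
/- For p = (p_x,p_y) and q = (q_x,q_y) in ℝ², let γ_{pq} = {(x,y) ∈ ℝ² : (x − p_x)² + p_y² = (y − q_x)² + q_y²}. Suppose p, q, p', q' ∈ ℝ² satisfy p_y² ≠ q_y² and p'_y² ≠ q'_y², and suppose the triple (p_x, q_x, q_y² − p_y²) is not equal to the triple (p'_x, q'_x, q'^2_y − p'^2_y). Then the intersection γ_{pq} ∩ γ_{p'q'} contains at most 2 points. -/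
lemma quad_roots (a b c : ℝ) (h : ¬(a = 0 ∧ b = 0 ∧ c = 0)) :
    ∃ r s : ℝ, ∀ t : ℝ, a*t^2 + b*t + c = 0 → t = r ∨ t = s := by
  by_cases ha : a = 0
  · subst ha
    by_cases hb : b = 0
    · subst hb
      refine ⟨0, 0, fun t ht => ?_⟩
      exfalso; apply h; refine ⟨rfl, rfl, ?_⟩; linarith [ht]
    · refine ⟨-c/b, -c/b, fun t ht => ?_⟩
      left; field_simp; linarith [ht]
  · by_cases hex : ∃ t : ℝ, a*t^2 + b*t + c = 0
    · obtain ⟨r, hr⟩ := hex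
      refine ⟨r, -b/a - r, fun t ht => ?_⟩
      have key : (t - r) * (a*(t+r) + b) = 0 := by linear_combination ht - hr
      rcases mul_eq_zero.mp key with h' | h'
      · left; linarith
      · right; field_simp; linarith
    · exact ⟨0, 0, fun t ht => absurd ⟨t, ht⟩ hex⟩

/-- Two distinct hyperbolas `γ_{pq}` (with distinct defining parameters) intersect in at
most two points. -/
theorem hyperbolas_intersect_in_at_most_two_points (p q p' q' : ℝ × ℝ)
    (h1 : p.2 ^ 2 ≠ q.2 ^ 2) (h2 : p'.2 ^ 2 ≠ q'.2 ^ 2)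
    (h3 : (p.1, q.1, q.2 ^ 2 - p.2 ^ 2) ≠ (p'.1, q'.1, q'.2 ^ 2 - p'.2 ^ 2)) :
    ∃ u v : ℝ × ℝ,
      {xy : ℝ × ℝ | (xy.1 - p.1) ^ 2 + p.2 ^ 2 = (xy.2 - q.1) ^ 2 + q.2 ^ 2} ∩
        {xy : ℝ × ℝ | (xy.1 - p'.1) ^ 2 + p'.2 ^ 2 = (xy.2 - q'.1) ^ 2 + q'.2 ^ 2} ⊆
      {u, v} := by
  set a : ℝ := p'.1 - p.1 with ha_def
  set b : ℝ := q'.1 - q.1 with hb_def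
  set e : ℝ := (p'.1^2 - p.1^2) + (p'.2^2 - p.2^2) - (q'.1^2 - q.1^2) - (q'.2^2 - q.2^2)
    with he_def
  have hline : ∀ xy : ℝ × ℝ,
      (xy.1 - p.1) ^ 2 + p.2 ^ 2 = (xy.2 - q.1) ^ 2 + q.2 ^ 2 →
      (xy.1 - p'.1) ^ 2 + p'.2 ^ 2 = (xy.2 - q'.1) ^ 2 + q'.2 ^ 2 →
      2*a*xy.1 - 2*b*xy.2 = e := by
    intro xy hx hy
    rw [ha_def, hb_def, he_def]
    linear_combination hx - hy
  by_cases hab : a = 0 ∧ b = 0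
  · obtain ⟨ha0, hb0⟩ := hab
    have he : e ≠ 0 := by
      intro he0
      apply h3
      have hp : p.1 = p'.1 := by rw [ha_def] at ha0; linarith
      have hq : q.1 = q'.1 := by rw [hb_def] at hb0; linarith
      rw [he_def] at he0
      refine Prod.ext hp (Prod.ext hq ?_)
      show q.2 ^ 2 - p.2 ^ 2 = q'.2 ^ 2 - p'.2 ^ 2
      linear_combination he0 + (p.1 + p'.1) * hp - (q.1 + q'.1) * hq
    refine ⟨0, 0, fun xy hxy => ?_⟩
    exfalso
    have hx : (xy.1 - p.1) ^ 2 + p.2 ^ 2 = (xy.2 - q.1) ^ 2 + q.2 ^ 2 := hxy.1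
    have hy : (xy.1 - p'.1) ^ 2 + p'.2 ^ 2 = (xy.2 - q'.1) ^ 2 + q'.2 ^ 2 := hxy.2
    have hl := hline xy hx hy
    rw [ha0, hb0] at hl
    apply he; linarith
  · by_cases ha : a = 0
    · have hb : b ≠ 0 := fun hb => hab ⟨ha, hb⟩
      set y0 : ℝ := -e/(2*b) with hy0
      obtain ⟨r, s, hrs⟩ := quad_roots 1 (-2*p.1)
        (p.1^2 + p.2^2 - (y0 - q.1)^2 - q.2^2) (by rintro ⟨h, -⟩; exact one_ne_zero h)
      refine ⟨(r, y0), (s, y0), fun xy hxy => ?_⟩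
      have hx : (xy.1 - p.1) ^ 2 + p.2 ^ 2 = (xy.2 - q.1) ^ 2 + q.2 ^ 2 := hxy.1
      have hy : (xy.1 - p'.1) ^ 2 + p'.2 ^ 2 = (xy.2 - q'.1) ^ 2 + q'.2 ^ 2 := hxy.2
      have hl := hline xy hx hy
      rw [ha] at hl
      have hyv : xy.2 = y0 := by rw [hy0]; field_simp; linarith
      have hq : 1*xy.1^2 + (-2*p.1)*xy.1 + (p.1^2 + p.2^2 - (y0 - q.1)^2 - q.2^2) = 0 := by
        rw [← hyv]; linear_combination hx
      rcases hrs xy.1 hq with h' | h'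
      · left; exact Prod.ext h' hyv
      · right; exact Prod.ext h' hyv
    · have hA : ¬(4*b^2 - 4*a^2 = 0 ∧ 4*b*(e - 2*a*p.1) + 8*a^2*q.1 = 0 ∧
          (e - 2*a*p.1)^2 + 4*a^2*(p.2^2 - q.1^2 - q.2^2) = 0) := by
        rintro ⟨hA, hB, hC⟩
        apply h1
        have h4a : (4:ℝ)*a ≠ 0 := by
          simp only [ne_eq, mul_eq_zero]; push_neg; exact ⟨by norm_num, ha⟩
        have hba : (b - a) * (b + a) = 0 := by linarith [hA]
        rcases mul_eq_zero.mp hba with h' | h'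
        · have hb : b = a := by linarith
          rw [hb] at hB
          have he'' : e - 2*a*p.1 + 2*a*q.1 = 0 := by
            have h4 : (4*a) * (e - 2*a*p.1 + 2*a*q.1) = 0 := by linear_combination hB
            rcases mul_eq_zero.mp h4 with h'' | h''
            · exact absurd h'' h4a
            · exact h''
          have hz : 4*a^2*(p.2^2 - q.2^2) = 0 := by
            linear_combination hC - (e - 2*a*p.1 - 2*a*q.1) * he''
          have h4a2 : (4:ℝ)*a^2 ≠ 0 := by positivity
          have := (mul_eq_zero.mp hz).resolve_left h4a2
          linarith
        · have hb : b = -a := by linarith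
          rw [hb] at hB
          have he'' : e - 2*a*p.1 - 2*a*q.1 = 0 := by
            have h4 : (-(4*a)) * (e - 2*a*p.1 - 2*a*q.1) = 0 := by linear_combination hB
            rcases mul_eq_zero.mp h4 with h'' | h''
            · exact absurd (by linarith [h'']) h4a
            · exact h''
          have hz : 4*a^2*(p.2^2 - q.2^2) = 0 := by
            linear_combination hC - (e - 2*a*p.1 + 2*a*q.1) * he''
          have h4a2 : (4:ℝ)*a^2 ≠ 0 := by positivity
          have := (mul_eq_zero.mp hz).resolve_left h4a2
          linarith
      obtain ⟨r, s, hrs⟩ := quad_roots (4*b^2 - 4*a^2)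
        (4*b*(e - 2*a*p.1) + 8*a^2*q.1)
        ((e - 2*a*p.1)^2 + 4*a^2*(p.2^2 - q.1^2 - q.2^2)) hA
      refine ⟨((2*b*r + e)/(2*a), r), ((2*b*s + e)/(2*a), s), fun xy hxy => ?_⟩
      have hx : (xy.1 - p.1) ^ 2 + p.2 ^ 2 = (xy.2 - q.1) ^ 2 + q.2 ^ 2 := hxy.1
      have hy : (xy.1 - p'.1) ^ 2 + p'.2 ^ 2 = (xy.2 - q'.1) ^ 2 + q'.2 ^ 2 := hxy.2
      have hl := hline xy hx hy
      have hq : (4*b^2 - 4*a^2)*xy.2^2 + (4*b*(e - 2*a*p.1) + 8*a^2*q.1)*xy.2 +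
          ((e - 2*a*p.1)^2 + 4*a^2*(p.2^2 - q.1^2 - q.2^2)) = 0 := by
        linear_combination (4*a^2) * hx -
          (2*b*xy.2 + e + 2*a*xy.1 - 4*a*p.1) * hl
      have hxv : ∀ t : ℝ, xy.2 = t → xy.1 = (2*b*t + e)/(2*a) := by
        intro t ht; rw [← ht]; field_simp; linarith
      rcases hrs xy.2 hq with h' | h'
      · left; exact Prod.ext (hxv r h') h'
      · right; exact Prod.ext (hxv s h') h'
end

section
/- There exists an absolute constant c > 0 such that for all finite sets A, B ⊂ ℝ with A and B nonempty, one has |A − A| · |{a² + b² : a ∈ A, b ∈ B}| ≥ c · |A|² · |B|^{1/2}, where A − A = {a − a' : a, a' ∈ A}. -/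
open Finset
open scoped Pointwise

lemma next_unique (X : Finset ℝ) {x x₁ x₂ : ℝ} (h₁ : x₁ ∈ X) (h₂ : x₂ ∈ X)
    (hx₁ : x < x₁) (hx₂ : x < x₂)
    (hc : (X.filter fun t => x < t ∧ t ≤ x₁).card =
          (X.filter fun t => x < t ∧ t ≤ x₂).card) :
    x₁ = x₂ := by
  have key : ∀ y₁ y₂ : ℝ, y₁ ∈ X → y₂ ∈ X → x < y₂ → y₁ < y₂ →
      (X.filter fun t => x < t ∧ t ≤ y₁).card < (X.filter fun t => x < t ∧ t ≤ y₂).card := by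
    intro y₁ y₂ hy₁ hy₂ hxy₂ hlt
    apply Finset.card_lt_card
    constructor
    · intro t ht
      simp only [mem_filter] at ht ⊢
      exact ⟨ht.1, ht.2.1, ht.2.2.trans hlt.le⟩
    · intro hsub
      have : y₂ ∈ X.filter fun t => x < t ∧ t ≤ y₁ :=
        hsub (by simp only [mem_filter]; exact ⟨hy₂, hxy₂, le_refl _⟩)
      simp only [mem_filter] at this
      linarith [this.2.2]
  rcases lt_trichotomy x₁ x₂ with h | h | h
  · exact absurd hc (key x₁ x₂ h₁ h₂ hx₂ h).ne
  · exact h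
  · exact absurd hc.symm (key x₂ x₁ h₂ h₁ hx₁ h).ne

/-- Core counting inequality. -/
lemma core (P B' : Finset ℝ) (hP : ∀ p ∈ P, 0 ≤ p) (h2 : 2 ≤ P.card) :
    (P.card - 1) ^ 3 * P.card * B'.card ≤
      32 * (P - P).card ^ 2 * ((P.image fun p => p ^ 2) + B').card ^ 2 := by
  classical
  rcases B'.eq_empty_or_nonempty with rfl | hB'
  · simp
  have hPne : P.Nonempty := Finset.card_pos.mp (by omega)
  set k := P.card with hk
  set K := k - 1 with hKdef
  have hKpos : 0 < K := by omega
  have hKk : K < k := by omega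
  -- sorted enumeration
  set a : ℕ → ℝ := fun j => if h : j < k then ((P.orderIsoOfFin hk.symm) ⟨j, h⟩ : ℝ) else 0 with ha
  have hmem : ∀ {j : ℕ}, j < k → a j ∈ P := by
    intro j hj
    simp only [ha, dif_pos hj]
    exact ((P.orderIsoOfFin hk.symm) ⟨j, hj⟩).2
  have hmono : ∀ {i j : ℕ}, i < j → j < k → a i < a j := by
    intro i j hij hj
    have hi : i < k := hij.trans hj
    simp only [ha, dif_pos hi, dif_pos hj]
    have h := (P.orderIsoOfFin hk.symm).strictMono (show (⟨i, hi⟩ : Fin k) < ⟨j, hj⟩ from hij)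
    exact_mod_cast h
  have hle : ∀ {i j : ℕ}, i ≤ j → j < k → a i ≤ a j := by
    intro i j hij hj
    rcases eq_or_lt_of_le hij with rfl | h
    · exact le_refl _
    · exact (hmono h hj).le
  set X := P - P with hX
  set Y := (P.image fun p => p ^ 2) + B' with hY
  set N₁ := X.card with hN₁
  set N₂ := Y.card with hN₂
  -- N₁ ≥ k, N₂ ≥ k, N₁ N₂ ≥ 1
  obtain ⟨p₀, hp₀⟩ := hPne
  have hN₁k : k ≤ N₁ := by
    have himg : (P.image fun p => p - p₀) ⊆ X := by
      intro t ht
      obtain ⟨p, hp, rfl⟩ := Finset.mem_image.mp ht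
      exact Finset.sub_mem_sub hp hp₀
    calc k = (P.image fun p => p - p₀).card := (Finset.card_image_of_injective _ sub_left_injective).symm
    _ ≤ N₁ := Finset.card_le_card himg
  have hsqinj : Set.InjOn (fun p : ℝ => p ^ 2) ↑P := by
    intro p hp q hq h
    have hp' : 0 ≤ p := hP p hp
    have hq' : 0 ≤ q := hP q hq
    have hpq : p ^ 2 = q ^ 2 := h
    have : p * p = q * q := by nlinarith [hpq]
    rcases mul_self_eq_mul_self_iff.mp this with h' | h'
    · exact h'
    · nlinarith
  have hN₂k : k ≤ N₂ := by
    calc k = (P.image fun p => p ^ 2).card := (Finset.card_image_of_injOn hsqinj).symm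
    _ ≤ N₂ := Finset.card_le_card_add_right hB'
  set G₁ := 4 * N₁ / K with hG₁
  set G₂ := 4 * N₂ / K with hG₂
  -- gap counting functions
  set g₁ : ℕ → ℝ → ℕ := fun i c => (X.filter fun t => a i - c < t ∧ t ≤ a (i + 1) - c).card with hg₁
  set g₂ : ℕ → ℝ → ℕ := fun i b => (Y.filter fun t => a i ^ 2 + b < t ∧ t ≤ a (i + 1) ^ 2 + b).card with hg₂
  -- membership and positivity facts for the gap counts
  have hg₁_mem : ∀ {i : ℕ}, i < K → ∀ {c : ℝ}, c ∈ P → a (i + 1) - c ∈ X := by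
    intro i hi c hc
    exact Finset.sub_mem_sub (hmem (by omega)) hc
  have hg₂_mem : ∀ {i : ℕ}, i < K → ∀ {b : ℝ}, b ∈ B' → a (i + 1) ^ 2 + b ∈ Y := by
    intro i hi b hb
    exact Finset.add_mem_add (Finset.mem_image_of_mem _ (hmem (by omega))) hb
  have hg₁_mem0 : ∀ {i : ℕ}, i < K → ∀ {c : ℝ}, c ∈ P → a i - c ∈ X := by
    intro i hi c hc
    exact Finset.sub_mem_sub (hmem (by omega)) hc
  have hg₂_mem0 : ∀ {i : ℕ}, i < K → ∀ {b : ℝ}, b ∈ B' → a i ^ 2 + b ∈ Y := by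
    intro i hi b hb
    exact Finset.add_mem_add (Finset.mem_image_of_mem _ (hmem (by omega))) hb
  have hstep : ∀ {i : ℕ}, i < K → a i < a (i + 1) := by
    intro i hi
    exact hmono (Nat.lt_succ_self i) (by omega)
  have hstep_sq : ∀ {i : ℕ}, i < K → a i ^ 2 < a (i + 1) ^ 2 := by
    intro i hi
    exact pow_lt_pow_left₀ (hstep hi) (hP _ (hmem (by omega))) two_ne_zero
  have hg₁_one : ∀ {i : ℕ}, i < K → ∀ {c : ℝ}, c ∈ P → 1 ≤ g₁ i c := by
    intro i hi c hc
    refine Finset.card_pos.mpr ⟨a (i + 1) - c, Finset.mem_filter.mpr ⟨hg₁_mem hi hc, ?_, le_refl _⟩⟩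
    have := hstep hi; linarith
  have hg₂_one : ∀ {i : ℕ}, i < K → ∀ {b : ℝ}, b ∈ B' → 1 ≤ g₂ i b := by
    intro i hi b hb
    refine Finset.card_pos.mpr ⟨a (i + 1) ^ 2 + b, Finset.mem_filter.mpr ⟨hg₂_mem hi hb, ?_, le_refl _⟩⟩
    have := hstep_sq hi; linarith
  -- for a fixed shift, the gap counts sum to at most the total count
  have hsum₁ : ∀ c : ℝ, (∑ i ∈ Finset.range K, g₁ i c) ≤ N₁ := by
    intro c
    have hdisj : ∀ i ∈ Finset.range K, ∀ j ∈ Finset.range K, i ≠ j →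
        Disjoint (X.filter fun t => a i - c < t ∧ t ≤ a (i + 1) - c)
          (X.filter fun t => a j - c < t ∧ t ≤ a (j + 1) - c) := by
      have key : ∀ i j : ℕ, i < j → j < K →
          Disjoint (X.filter fun t => a i - c < t ∧ t ≤ a (i + 1) - c)
            (X.filter fun t => a j - c < t ∧ t ≤ a (j + 1) - c) := by
        intro i j hij hj
        rw [Finset.disjoint_left]
        intro t ht₁ ht₂
        simp only [Finset.mem_filter] at ht₁ ht₂
        have : a (i + 1) ≤ a j := hle (by omega) (by omega)
        linarith [ht₁.2.2, ht₂.2.1]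
      intro i hi j hj hij
      rcases hij.lt_or_gt with h | h
      · exact key i j h (Finset.mem_range.mp hj)
      · exact (key j i h (Finset.mem_range.mp hi)).symm
    calc (∑ i ∈ Finset.range K, g₁ i c)
        = ((Finset.range K).biUnion fun i =>
            X.filter fun t => a i - c < t ∧ t ≤ a (i + 1) - c).card :=
          (Finset.card_biUnion hdisj).symm
      _ ≤ N₁ := Finset.card_le_card (Finset.biUnion_subset.mpr fun i _ => Finset.filter_subset _ _)
  have hsum₂ : ∀ b : ℝ, (∑ i ∈ Finset.range K, g₂ i b) ≤ N₂ := by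
    intro b
    have hdisj : ∀ i ∈ Finset.range K, ∀ j ∈ Finset.range K, i ≠ j →
        Disjoint (Y.filter fun t => a i ^ 2 + b < t ∧ t ≤ a (i + 1) ^ 2 + b)
          (Y.filter fun t => a j ^ 2 + b < t ∧ t ≤ a (j + 1) ^ 2 + b) := by
      have key : ∀ i j : ℕ, i < j → j < K →
          Disjoint (Y.filter fun t => a i ^ 2 + b < t ∧ t ≤ a (i + 1) ^ 2 + b)
            (Y.filter fun t => a j ^ 2 + b < t ∧ t ≤ a (j + 1) ^ 2 + b) := by
        intro i j hij hj
        rw [Finset.disjoint_left]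
        intro t ht₁ ht₂
        simp only [Finset.mem_filter] at ht₁ ht₂
        have h1 : a (i + 1) ≤ a j := hle (by omega) (by omega)
        have h2 : a (i + 1) ^ 2 ≤ a j ^ 2 :=
          pow_le_pow_left₀ (hP _ (hmem (by omega))) h1 2
        linarith [ht₁.2.2, ht₂.2.1]
      intro i hi j hj hij
      rcases hij.lt_or_gt with h | h
      · exact key i j h (Finset.mem_range.mp hj)
      · exact (key j i h (Finset.mem_range.mp hi)).symm
    calc (∑ i ∈ Finset.range K, g₂ i b)
        = ((Finset.range K).biUnion fun i =>
            Y.filter fun t => a i ^ 2 + b < t ∧ t ≤ a (i + 1) ^ 2 + b).card :=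
          (Finset.card_biUnion hdisj).symm
      _ ≤ N₂ := Finset.card_le_card (Finset.biUnion_subset.mpr fun i _ => Finset.filter_subset _ _)
  -- few indices have a large gap count
  have hdivlt₁ : 4 * N₁ < K * (G₁ + 1) := by
    have h := Nat.div_add_mod (4 * N₁) K
    have h' : (4 * N₁) % K < K := Nat.mod_lt _ hKpos
    calc 4 * N₁ = K * (4 * N₁ / K) + (4 * N₁) % K := h.symm
      _ < K * (4 * N₁ / K) + K := by omega
      _ = K * (G₁ + 1) := by rw [Nat.mul_succ, hG₁]
  have hdivlt₂ : 4 * N₂ < K * (G₂ + 1) := by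
    have h := Nat.div_add_mod (4 * N₂) K
    have h' : (4 * N₂) % K < K := Nat.mod_lt _ hKpos
    calc 4 * N₂ = K * (4 * N₂ / K) + (4 * N₂) % K := h.symm
      _ < K * (4 * N₂ / K) + K := by omega
      _ = K * (G₂ + 1) := by rw [Nat.mul_succ, hG₂]
  have hbad₁ : ∀ c : ℝ, 4 * ((Finset.range K).filter fun i => G₁ + 1 ≤ g₁ i c).card < K := by
    intro c
    set Bc := (Finset.range K).filter fun i => G₁ + 1 ≤ g₁ i c with hBc
    have h1 : Bc.card * (G₁ + 1) ≤ N₁ := by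
      calc Bc.card * (G₁ + 1) = Bc.card • (G₁ + 1) := by rw [smul_eq_mul]
        _ ≤ ∑ i ∈ Bc, g₁ i c :=
          Finset.card_nsmul_le_sum _ _ _ (fun i hi => (Finset.mem_filter.mp hi).2)
        _ ≤ ∑ i ∈ Finset.range K, g₁ i c :=
          Finset.sum_le_sum_of_subset (Finset.filter_subset _ _)
        _ ≤ N₁ := hsum₁ c
    have h2 : (4 * Bc.card) * (G₁ + 1) < K * (G₁ + 1) := by
      calc (4 * Bc.card) * (G₁ + 1) = 4 * (Bc.card * (G₁ + 1)) := by ring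
        _ ≤ 4 * N₁ := by omega
        _ < K * (G₁ + 1) := hdivlt₁
    exact lt_of_mul_lt_mul_right h2 (Nat.zero_le _)
  have hbad₂ : ∀ b : ℝ, 4 * ((Finset.range K).filter fun i => G₂ + 1 ≤ g₂ i b).card < K := by
    intro b
    set Bc := (Finset.range K).filter fun i => G₂ + 1 ≤ g₂ i b with hBc
    have h1 : Bc.card * (G₂ + 1) ≤ N₂ := by
      calc Bc.card * (G₂ + 1) = Bc.card • (G₂ + 1) := by rw [smul_eq_mul]
        _ ≤ ∑ i ∈ Bc, g₂ i b :=
          Finset.card_nsmul_le_sum _ _ _ (fun i hi => (Finset.mem_filter.mp hi).2)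
        _ ≤ ∑ i ∈ Finset.range K, g₂ i b :=
          Finset.sum_le_sum_of_subset (Finset.filter_subset _ _)
        _ ≤ N₂ := hsum₂ b
    have h2 : (4 * Bc.card) * (G₂ + 1) < K * (G₂ + 1) := by
      calc (4 * Bc.card) * (G₂ + 1) = 4 * (Bc.card * (G₂ + 1)) := by ring
        _ ≤ 4 * N₂ := by omega
        _ < K * (G₂ + 1) := hdivlt₂
    exact lt_of_mul_lt_mul_right h2 (Nat.zero_le _)
  -- most indices are good
  have hgood : ∀ c b : ℝ, K ≤ 2 *
      ((Finset.range K).filter fun i => g₁ i c ≤ G₁ ∧ g₂ i b ≤ G₂).card := by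
    intro c b
    have hsub : Finset.range K ⊆
        (((Finset.range K).filter fun i => g₁ i c ≤ G₁ ∧ g₂ i b ≤ G₂) ∪
          ((Finset.range K).filter fun i => G₁ + 1 ≤ g₁ i c)) ∪
          ((Finset.range K).filter fun i => G₂ + 1 ≤ g₂ i b) := by
      intro i hi
      simp only [Finset.mem_union, Finset.mem_filter]
      by_cases h₁ : g₁ i c ≤ G₁
      · by_cases h₂ : g₂ i b ≤ G₂
        · exact Or.inl (Or.inl ⟨hi, h₁, h₂⟩)
        · exact Or.inr ⟨hi, by omega⟩
      · exact Or.inl (Or.inr ⟨hi, by omega⟩)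
    have h1 : K ≤
        ((Finset.range K).filter fun i => g₁ i c ≤ G₁ ∧ g₂ i b ≤ G₂).card +
        ((Finset.range K).filter fun i => G₁ + 1 ≤ g₁ i c).card +
        ((Finset.range K).filter fun i => G₂ + 1 ≤ g₂ i b).card := by
      calc K = (Finset.range K).card := (Finset.card_range K).symm
        _ ≤ _ := Finset.card_le_card hsub
        _ ≤ _ := by
          refine le_trans (Finset.card_union_le _ _) ?_
          exact Nat.add_le_add_right (Finset.card_union_le _ _) _
    have h2 := hbad₁ c
    have h3 := hbad₂ b
    omega
  -- the global injection
  set SIGMA := (P ×ˢ B').sigma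
      (fun cb => (Finset.range K).filter fun i => g₁ i cb.1 ≤ G₁ ∧ g₂ i cb.2 ≤ G₂) with hSIGMA
  set TARGET := (X ×ˢ Finset.Icc 1 G₁) ×ˢ (Y ×ˢ Finset.Icc 1 G₂) with hTARGET
  have hinj : SIGMA.card ≤ TARGET.card := by
    apply Finset.card_le_card_of_injOn
      (fun s => ((a s.2 - s.1.1, g₁ s.2 s.1.1), (a s.2 ^ 2 + s.1.2, g₂ s.2 s.1.2)))
    · rintro ⟨⟨c, b⟩, i⟩ hs
      simp only [hSIGMA, Finset.coe_sigma, Set.mem_sigma_iff, Finset.mem_coe,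
        Finset.mem_product, Finset.mem_filter, Finset.mem_range] at hs
      obtain ⟨⟨hcP, hbB⟩, hiK, hgb₁, hgb₂⟩ := hs
      simp only [hTARGET, Finset.mem_coe, Finset.mem_product, Finset.mem_Icc]
      exact ⟨⟨hg₁_mem0 hiK hcP, hg₁_one hiK hcP, hgb₁⟩,
             ⟨hg₂_mem0 hiK hbB, hg₂_one hiK hbB, hgb₂⟩⟩
    · rintro ⟨⟨c, b⟩, i⟩ hs ⟨⟨c', b'⟩, i'⟩ hs' heq
      simp only [hSIGMA, Finset.coe_sigma, Set.mem_sigma_iff, Finset.mem_coe,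
        Finset.mem_product, Finset.mem_filter, Finset.mem_range] at hs hs'
      obtain ⟨⟨hcP, hbB⟩, hiK, hgb₁, hgb₂⟩ := hs
      obtain ⟨⟨hcP', hbB'⟩, hiK', hgb₁', hgb₂'⟩ := hs'
      simp only [Prod.mk.injEq] at heq
      obtain ⟨⟨e₁, e₂⟩, e₃, e₄⟩ := heq
      -- X-side: recover the next element
      have E₂ : a (i + 1) - c = a (i' + 1) - c' := by
        have hc₂ : (X.filter fun t => a i - c < t ∧ t ≤ a (i + 1) - c).card =
            (X.filter fun t => a i - c < t ∧ t ≤ a (i' + 1) - c').card := by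
          have := e₂
          simp only [hg₁] at this
          rw [← e₁] at this
          exact this
        exact next_unique X (hg₁_mem hiK hcP) (hg₁_mem hiK' hcP')
          (by have := hstep hiK; linarith)
          (by have := hstep hiK'; rw [e₁]; linarith) hc₂
      -- Y-side: recover the next element
      have E₄ : a (i + 1) ^ 2 + b = a (i' + 1) ^ 2 + b' := by
        have hc₄ : (Y.filter fun t => a i ^ 2 + b < t ∧ t ≤ a (i + 1) ^ 2 + b).card =
            (Y.filter fun t => a i ^ 2 + b < t ∧ t ≤ a (i' + 1) ^ 2 + b').card := by
          have := e₄
          simp only [hg₂] at this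
          rw [← e₃] at this
          exact this
        exact next_unique Y (hg₂_mem hiK hbB) (hg₂_mem hiK' hbB')
          (by have := hstep_sq hiK; linarith)
          (by have := hstep_sq hiK'; rw [e₃]; linarith) hc₄
      -- algebra: recover i, then c and b
      have hveq : a (i + 1) - a i = a (i' + 1) - a i' := by linarith
      have hw : a (i + 1) ^ 2 - a i ^ 2 = a (i' + 1) ^ 2 - a i' ^ 2 := by linarith
      have hv : (0 : ℝ) < a (i + 1) - a i := by have := hstep hiK; linarith
      have hsumeq : a (i + 1) + a i = a (i' + 1) + a i' := by
        have hmul : (a (i + 1) - a i) * (a (i + 1) + a i) =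
            (a (i + 1) - a i) * (a (i' + 1) + a i') := by
          linear_combination hw - (a (i' + 1) + a i') * hveq
        exact mul_left_cancel₀ (ne_of_gt hv) hmul
      have hpp : a i = a i' := by linarith
      have hii : i = i' := by
        rcases lt_trichotomy i i' with h | h | h
        · exact absurd hpp (ne_of_lt (hmono h (by omega)))
        · exact h
        · exact absurd hpp.symm (ne_of_lt (hmono h (by omega)))
      subst hii
      have hcc : c = c' := by linarith
      have hbb : b = b' := by linarith
      subst hcc; subst hbb; rfl
  -- put the count together
  have hcount : K * (k * B'.card) ≤ 2 * (N₁ * G₁ * (N₂ * G₂)) := by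
    have hTcard : TARGET.card = N₁ * G₁ * (N₂ * G₂) := by
      simp only [hTARGET, Finset.card_product, Nat.card_Icc, Nat.add_sub_cancel]
      rfl
    calc K * (k * B'.card) = (P ×ˢ B').card * K := by
          rw [Finset.card_product]; ring
      _ = ∑ _cb ∈ P ×ˢ B', K := by rw [Finset.sum_const, smul_eq_mul]
      _ ≤ ∑ cb ∈ P ×ˢ B',
            2 * ((Finset.range K).filter fun i => g₁ i cb.1 ≤ G₁ ∧ g₂ i cb.2 ≤ G₂).card :=
          Finset.sum_le_sum fun cb _ => hgood cb.1 cb.2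
      _ = 2 * ∑ cb ∈ P ×ˢ B',
            ((Finset.range K).filter fun i => g₁ i cb.1 ≤ G₁ ∧ g₂ i cb.2 ≤ G₂).card := by
          rw [Finset.mul_sum]
      _ = 2 * SIGMA.card := by rw [hSIGMA, Finset.card_sigma]
      _ ≤ 2 * TARGET.card := Nat.mul_le_mul_left _ hinj
      _ = 2 * (N₁ * G₁ * (N₂ * G₂)) := by rw [hTcard]
  -- final arithmetic
  have hKG₁ : K * G₁ ≤ 4 * N₁ := by
    rw [hG₁]; exact Nat.mul_div_le (4 * N₁) K
  have hKG₂ : K * G₂ ≤ 4 * N₂ := by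
    rw [hG₂]; exact Nat.mul_div_le (4 * N₂) K
  calc K ^ 3 * k * B'.card = K * K * (K * (k * B'.card)) := by ring
    _ ≤ K * K * (2 * (N₁ * G₁ * (N₂ * G₂))) := Nat.mul_le_mul_left _ hcount
    _ = 2 * ((K * G₁) * (K * G₂)) * (N₁ * N₂) := by ring
    _ ≤ 2 * ((4 * N₁) * (4 * N₂)) * (N₁ * N₂) := by
        have := Nat.mul_le_mul hKG₁ hKG₂
        exact Nat.mul_le_mul_right _ (Nat.mul_le_mul_left _ this)
    _ = 32 * N₁ ^ 2 * N₂ ^ 2 := by ring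


/-- difference set is at least as large as the set -/
lemma card_le_card_sub_self (A : Finset ℝ) (hA : A.Nonempty) : A.card ≤ (A - A).card := by
  classical
  obtain ⟨a₀, ha₀⟩ := hA
  have himg : (A.image fun x => x - a₀) ⊆ A - A := by
    intro t ht
    obtain ⟨x, hx, rfl⟩ := Finset.mem_image.mp ht
    exact Finset.sub_mem_sub hx ha₀
  calc A.card = (A.image fun x => x - a₀).card :=
        (Finset.card_image_of_injective _ sub_left_injective).symm
    _ ≤ (A - A).card := Finset.card_le_card himg

/-- squaring is at most 2-to-1 -/
lemma card_le_two_mul_card_image_sq (B : Finset ℝ) :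
    B.card ≤ 2 * (B.image fun b => b ^ 2).card := by
  classical
  refine Finset.card_le_mul_card_image B 2 ?_
  intro y hy
  obtain ⟨b₀, hb₀, rfl⟩ := Finset.mem_image.mp hy
  have hsub : (B.filter fun b => b ^ 2 = b₀ ^ 2) ⊆ {b₀, -b₀} := by
    intro t ht
    have h := (Finset.mem_filter.mp ht).2
    have h' : t * t = b₀ * b₀ := by nlinarith [h]
    rcases mul_self_eq_mul_self_iff.mp h' with h'' | h''
    · simp [h'']
    · simp [h'']
  calc (B.filter fun b => b ^ 2 = b₀ ^ 2).card ≤ ({b₀, -b₀} : Finset ℝ).card :=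
        Finset.card_le_card hsub
    _ ≤ 2 := Finset.card_le_two

lemma assemble (A B : Finset ℝ) (hA : A.Nonempty) (hB : B.Nonempty) (P : Finset ℝ)
    (hP0 : ∀ p ∈ P, 0 ≤ p) (hP2 : A.card ≤ 2 * P.card)
    (hPX : P - P ⊆ A - A)
    (hPY : (P.image fun p => p ^ 2) + (B.image fun b => b ^ 2) ⊆
      (A ×ˢ B).image fun ab => ab.1 ^ 2 + ab.2 ^ 2) :
    (1 / 60 : ℝ) * (A.card : ℝ) ^ 2 * (B.card : ℝ) ^ ((1 : ℝ) / 2) ≤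
      (((A - A).card : ℝ)) *
        ((((A ×ˢ B).image fun ab => ab.1 ^ 2 + ab.2 ^ 2).card : ℝ)) := by
  classical
  set n := A.card with hn
  set m := B.card with hm
  set B' := B.image fun b => b ^ 2 with hB'
  set S := (A ×ˢ B).image fun ab => ab.1 ^ 2 + ab.2 ^ 2 with hS
  set d := (A - A).card with hd
  set s := S.card with hs
  have hn1 : 1 ≤ n := Finset.card_pos.mpr hA
  have hm1 : 1 ≤ m := Finset.card_pos.mpr hB
  have hP1 : 1 ≤ P.card := by omega
  have hPne : P.Nonempty := Finset.card_pos.mp hP1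
  have hB'ne : B'.Nonempty := hB.image _
  have hmm' : m ≤ 2 * B'.card := card_le_two_mul_card_image_sq B
  have hdn : n ≤ d := card_le_card_sub_self A hA
  have hsB' : B'.card ≤ s := by
    calc B'.card ≤ ((P.image fun p => p ^ 2) + B').card :=
          Finset.card_le_card_add_left (hPne.image _)
      _ ≤ s := Finset.card_le_card hPY
  -- real versions of basic quantities
  set t : ℝ := (m : ℝ) ^ ((1 : ℝ) / 2) with htdef
  have ht0 : 0 ≤ t := Real.rpow_nonneg (Nat.cast_nonneg m) _
  have ht2 : t ^ 2 = (m : ℝ) := by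
    rw [htdef, ← Real.rpow_natCast ((m : ℝ) ^ ((1 : ℝ) / 2)) 2,
      ← Real.rpow_mul (Nat.cast_nonneg m)]
    norm_num
  have ht1 : 1 ≤ t := by nlinarith [ht2, ht0, (by exact_mod_cast hm1 : (1 : ℝ) ≤ (m : ℝ))]
  have hds0 : (0 : ℝ) ≤ (d : ℝ) * (s : ℝ) := by positivity
  by_cases hn4 : n ≤ 4
  · -- small case
    have hdr : (n : ℝ) ≤ (d : ℝ) := by exact_mod_cast hdn
    have hsr : (m : ℝ) ≤ 2 * (s : ℝ) := by exact_mod_cast hmm'.trans (by omega)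
    have hnm : (n : ℝ) * ((m : ℝ) / 2) ≤ (d : ℝ) * (s : ℝ) := by
      apply mul_le_mul hdr (by linarith) (by positivity) (by positivity)
    have hnr4 : (n : ℝ) ≤ 4 := by exact_mod_cast hn4
    have hnr1 : (1 : ℝ) ≤ (n : ℝ) := by exact_mod_cast hn1
    have htm : t ≤ (m : ℝ) := by nlinarith [ht2, ht1]
    nlinarith [hnm, htm, ht1, hnr4, hnr1, mul_le_mul_of_nonneg_left htm (by positivity : (0:ℝ) ≤ (n:ℝ))]
  · -- main case: n ≥ 5
    push_neg at hn4
    have hP3 : 3 ≤ P.card := by omega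
    have hcore := core P B' hP0 (by omega)
    -- |P - P| ≤ d and Y-card ≤ s
    have hXd : (P - P).card ≤ d := Finset.card_le_card hPX
    have hYs : ((P.image fun p => p ^ 2) + B').card ≤ s := Finset.card_le_card hPY
    -- natural number chain : n^4 * m ≤ 3456 * (d*s)^2
    have hn3K : n ≤ 3 * (P.card - 1) := by omega
    have hnat : n ^ 4 * m ≤ 3456 * (d * s) ^ 2 := by
      calc n ^ 4 * m = n ^ 3 * (n * m) := by ring
        _ ≤ (3 * (P.card - 1)) ^ 3 * ((2 * P.card) * (2 * B'.card)) := by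
            have h1 : n ^ 3 ≤ (3 * (P.card - 1)) ^ 3 := Nat.pow_le_pow_left hn3K 3
            have h2 : n * m ≤ (2 * P.card) * (2 * B'.card) :=
              Nat.mul_le_mul hP2 hmm'
            exact Nat.mul_le_mul h1 h2
        _ = 108 * ((P.card - 1) ^ 3 * P.card * B'.card) := by ring
        _ ≤ 108 * (32 * (P - P).card ^ 2 * ((P.image fun p => p ^ 2) + B').card ^ 2) :=
            Nat.mul_le_mul_left _ hcore
        _ ≤ 108 * (32 * d ^ 2 * s ^ 2) := by
            have h1 : (P - P).card ^ 2 ≤ d ^ 2 := Nat.pow_le_pow_left hXd 2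
            have h2 : ((P.image fun p => p ^ 2) + B').card ^ 2 ≤ s ^ 2 :=
              Nat.pow_le_pow_left hYs 2
            exact Nat.mul_le_mul_left _ (Nat.mul_le_mul (Nat.mul_le_mul_left _ h1) h2)
        _ = 3456 * (d * s) ^ 2 := by ring
    have hreal : ((n : ℝ)) ^ 4 * (m : ℝ) ≤ 3456 * ((d : ℝ) * (s : ℝ)) ^ 2 := by
      exact_mod_cast hnat
    have hsq : ((1 / 60 : ℝ) * (n : ℝ) ^ 2 * t) ^ 2 ≤ ((d : ℝ) * (s : ℝ)) ^ 2 := by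
      have : ((1 / 60 : ℝ) * (n : ℝ) ^ 2 * t) ^ 2 = (1 / 3600) * ((n : ℝ) ^ 4 * t ^ 2) := by ring
      rw [this, ht2]
      nlinarith [hreal]
    have hL0 : (0 : ℝ) ≤ (1 / 60 : ℝ) * (n : ℝ) ^ 2 * t := by positivity
    calc (1 / 60 : ℝ) * (n : ℝ) ^ 2 * t
        = Real.sqrt (((1 / 60 : ℝ) * (n : ℝ) ^ 2 * t) ^ 2) := (Real.sqrt_sq hL0).symm
      _ ≤ Real.sqrt (((d : ℝ) * (s : ℝ)) ^ 2) := Real.sqrt_le_sqrt hsq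
      _ = (d : ℝ) * (s : ℝ) := Real.sqrt_sq hds0

/-- For finite nonempty sets `A, B ⊆ ℝ`,
`|A − A| · |{a² + b² : a ∈ A, b ∈ B}| = Ω(|A|² |B|^(1/2))`. -/
theorem difference_set_times_sum_of_squares :
    ∃ c : ℝ, 0 < c ∧
      ∀ A B : Finset ℝ, A.Nonempty → B.Nonempty →
        c * (A.card : ℝ) ^ 2 * (B.card : ℝ) ^ ((1 : ℝ) / 2) ≤
          ((A - A).card : ℝ) *
            (((A ×ˢ B).image (fun ab => ab.1 ^ 2 + ab.2 ^ 2)).card : ℝ) := by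
  classical
  refine ⟨1 / 60, by norm_num, ?_⟩
  intro A B hA hB
  set Apos := A.filter fun x => 0 ≤ x with hApos
  set Aneg := A.filter fun x => ¬ 0 ≤ x with hAneg
  have hsplit : Apos.card + Aneg.card = A.card :=
    Finset.card_filter_add_card_filter_not _
  by_cases hcase : Aneg.card ≤ Apos.card
  · -- use the nonnegative part
    refine assemble A B hA hB Apos ?_ ?_ ?_ ?_
    · intro p hp; exact (Finset.mem_filter.mp hp).2
    · omega
    · intro x hx
      rw [Finset.mem_sub] at hx ⊢
      obtain ⟨u, hu, v, hv, rfl⟩ := hx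
      exact ⟨u, (Finset.mem_filter.mp hu).1, v, (Finset.mem_filter.mp hv).1, rfl⟩
    · intro x hx
      rw [Finset.mem_add] at hx
      obtain ⟨u, hu, v, hv, rfl⟩ := hx
      obtain ⟨p, hp, rfl⟩ := Finset.mem_image.mp hu
      obtain ⟨b, hb, rfl⟩ := Finset.mem_image.mp hv
      exact Finset.mem_image.mpr ⟨(p, b),
        Finset.mem_product.mpr ⟨(Finset.mem_filter.mp hp).1, hb⟩, rfl⟩
  · -- use the negated negative part
    refine assemble A B hA hB (Aneg.image fun x => -x) ?_ ?_ ?_ ?_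
    · intro p hp
      obtain ⟨x, hx, rfl⟩ := Finset.mem_image.mp hp
      have := (Finset.mem_filter.mp hx).2
      push_neg at this
      linarith
    · rw [Finset.card_image_of_injective _ neg_injective]
      omega
    · intro x hx
      rw [Finset.mem_sub] at hx ⊢
      obtain ⟨u, hu, v, hv, rfl⟩ := hx
      obtain ⟨p, hp, rfl⟩ := Finset.mem_image.mp hu
      obtain ⟨q, hq, rfl⟩ := Finset.mem_image.mp hv
      exact ⟨q, (Finset.mem_filter.mp hq).1, p, (Finset.mem_filter.mp hp).1, by ring⟩
    · intro x hx
      rw [Finset.mem_add] at hx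
      obtain ⟨u, hu, v, hv, rfl⟩ := hx
      obtain ⟨p, hp, rfl⟩ := Finset.mem_image.mp hu
      obtain ⟨q, hq, rfl⟩ := Finset.mem_image.mp hp
      obtain ⟨b, hb, rfl⟩ := Finset.mem_image.mp hv
      exact Finset.mem_image.mpr ⟨(q, b),
        Finset.mem_product.mpr ⟨(Finset.mem_filter.mp hq).1, hb⟩, by ring⟩
end

section
/- For p = (p_x,p_y), q = (q_x,q_y) ∈ ℝ², set A_{pq} = (p_x² + p_y² − q_x² − q_y²)/2 and define the complex curve γ_{pq} = {(a_x,a_y,b_x,b_y) ∈ ℂ⁴ : a_x p_x + a_y p_y = b_x q_x + b_y q_y + A_{pq}, a_x² + a_y² = 1, b_x² + b_y² = 1}. Suppose p, q, p', q' ∈ ℝ² are such that all eight coordinates p_x, p_y, q_x, q_y, p'_x, p'_y, q'_x, q'_y are nonzero, A_{pq} ≠ 0, A_{p'q'} ≠ 0, and (p,q) ≠ (p',q'). Then the intersection γ_{pq} ∩ γ_{p'q'} contains at most 4 points. -/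
/-- The complex curve `γ_{pq} ⊆ ℂ⁴` associated to a pair of planar points `p, q`. -/
def quadCurve (p q : ℝ × ℝ) : Set (ℂ × ℂ × ℂ × ℂ) :=
  {v : ℂ × ℂ × ℂ × ℂ |
    v.1 * (p.1 : ℂ) + v.2.1 * (p.2 : ℂ) =
      v.2.2.1 * (q.1 : ℂ) + v.2.2.2 * (q.2 : ℂ) +
        (((p.1 ^ 2 + p.2 ^ 2 - q.1 ^ 2 - q.2 ^ 2) / 2 : ℝ) : ℂ) ∧
    v.1 ^ 2 + v.2.1 ^ 2 = 1 ∧ v.2.2.1 ^ 2 + v.2.2.2 ^ 2 = 1}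

open Polynomial

lemma list_cover {α : Type*} [Inhabited α] (l : List α) (h : l.length ≤ 4) :
    ∃ z1 z2 z3 z4 : α, ∀ z ∈ l, z = z1 ∨ z = z2 ∨ z = z3 ∨ z = z4 := by
  rcases l with _|⟨a, _|⟨b, _|⟨c, _|⟨d, _|⟨e, t⟩⟩⟩⟩⟩
  · exact ⟨default, default, default, default, by simp⟩
  · exact ⟨a, a, a, a, by intro z hz; simp at hz; tauto⟩
  · exact ⟨a, b, b, b, by intro z hz; simp at hz; tauto⟩
  · exact ⟨a, b, c, c, by intro z hz; simp at hz; tauto⟩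
  · exact ⟨a, b, c, d, by intro z hz; simp at hz; tauto⟩
  · simp at h; omega

lemma lem2 (P1 P2 : ℝ) (h1 : P1 ≠ 0) (h2 : P2 ≠ 0) (c : ℂ) :
    ∃ w1 w2 : ℂ × ℂ, ∀ x y : ℂ, x ^ 2 + y ^ 2 = 1 → x * P1 + y * P2 = c →
      (x, y) = w1 ∨ (x, y) = w2 := by
  have ha : ((P1 : ℂ) ^ 2 + (P2 : ℂ) ^ 2) ≠ 0 := by
    have : ((P1 ^ 2 + P2 ^ 2 : ℝ) : ℂ) ≠ 0 := by
      simp only [ne_eq, Complex.ofReal_eq_zero]; positivity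
    push_cast at this; exact this
  obtain ⟨s, hs⟩ := IsAlgClosed.exists_pow_nat_eq
    (k := ℂ) (discrim ((P1:ℂ)^2+(P2:ℂ)^2) (-2*P1*c) (c^2 - (P2:ℂ)^2)) (n := 2) (by norm_num)
  set a : ℂ := (P1:ℂ)^2+(P2:ℂ)^2
  set b : ℂ := -2*(P1:ℂ)*c
  set c' : ℂ := c^2 - (P2:ℂ)^2
  have hs' : discrim a b c' = s * s := by rw [← hs]; ring
  refine ⟨((-b + s) / (2*a), (c - ((-b + s) / (2*a)) * P1)/P2),
          ((-b - s) / (2*a), (c - ((-b - s) / (2*a)) * P1)/P2), ?_⟩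
  intro x y hcirc hlin
  have hP2 : (P2 : ℂ) ≠ 0 := Complex.ofReal_ne_zero.mpr h2
  have hquad : a * (x * x) + b * x + c' = 0 := by
    simp only [a, b, c']
    linear_combination (P2:ℂ)^2 * hcirc + (x*(P1:ℂ) - c - y*(P2:ℂ)) * hlin
  have hy : y = (c - x * P1) / P2 := by
    field_simp
    linear_combination hlin
  rcases (quadratic_eq_zero_iff ha hs' x).mp hquad with hx | hx
  · left; rw [hy, hx]
  · right; rw [hy, hx]

lemma core_s12 (m1 m2 m3 m4 c1 c2 : ℝ) (hM : ¬(m1 = 0 ∧ m3 = 0)) (hc : ¬(c1 = 0 ∧ c2 = 0)) :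
    ∃ w1 w2 w3 w4 : ℂ × ℂ, ∀ x y : ℂ, x ^ 2 + y ^ 2 = 1 →
      ((m1:ℂ) * x + (m2:ℂ) * y + (c1:ℂ)) ^ 2 + ((m3:ℂ) * x + (m4:ℂ) * y + (c2:ℂ)) ^ 2 = 1 →
      (x, y) = w1 ∨ (x, y) = w2 ∨ (x, y) = w3 ∨ (x, y) = w4 := by
  set a4 : ℂ := ((m1^2 + m3^2 - m2^2 - m4^2 : ℝ) : ℂ) - 2 * Complex.I * ((m1*m2 + m3*m4 : ℝ) : ℂ) with ha4
  set a3 : ℂ := 4 * ((m1*c1 + m3*c2 : ℝ) : ℂ) - 4 * Complex.I * ((m2*c1 + m4*c2 : ℝ) : ℂ) with ha3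
  set a2 : ℂ := ((2*(m1^2 + m3^2) + 2*(m2^2 + m4^2) + 4*(c1^2 + c2^2 - 1) : ℝ) : ℂ) with ha2
  set a1 : ℂ := 4 * ((m1*c1 + m3*c2 : ℝ) : ℂ) + 4 * Complex.I * ((m2*c1 + m4*c2 : ℝ) : ℂ) with ha1
  set a0 : ℂ := ((m1^2 + m3^2 - m2^2 - m4^2 : ℝ) : ℂ) + 2 * Complex.I * ((m1*m2 + m3*m4 : ℝ) : ℂ) with ha0
  set P : ℂ[X] := C a4 * X^4 + C a3 * X^3 + C a2 * X^2 + C a1 * X + C a0 with hP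
  have hP0 : P ≠ 0 := by
    intro h
    have h4 : a4 = 0 := by
      have := congrArg (fun p => Polynomial.coeff p 4) h
      simpa [hP] using this
    have h0 : a0 = 0 := by
      have := congrArg (fun p => Polynomial.coeff p 0) h
      simpa [hP] using this
    have h3 : a3 = 0 := by
      have := congrArg (fun p => Polynomial.coeff p 3) h
      simpa [hP] using this
    rw [ha4] at h4; rw [ha0] at h0; rw [ha3] at h3
    simp only [Complex.ext_iff, ← Complex.ofReal_pow, Complex.add_re, Complex.sub_re,
      Complex.add_im, Complex.sub_im, Complex.mul_re, Complex.mul_im, Complex.ofReal_re,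
      Complex.ofReal_im, Complex.I_re, Complex.I_im, Complex.zero_re, Complex.zero_im,
      Complex.re_ofNat, Complex.im_ofNat] at h4 h0 h3
    obtain ⟨e1, e2⟩ := h4
    obtain ⟨e3, e4⟩ := h3
    have hs1 : m1 ^ 2 + m3 ^ 2 ≠ 0 := by
      intro hz
      exact hM ⟨by nlinarith [sq_nonneg m1, sq_nonneg m3], by nlinarith [sq_nonneg m1, sq_nonneg m3]⟩
    have hdet2 : (m1*m4 - m2*m3) ^ 2 = (m1^2 + m3^2) ^ 2 := by nlinarith [e1, e2, sq_nonneg (m1*m2+m3*m4)]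
    have hdet : m1*m4 - m2*m3 ≠ 0 := by
      intro hz
      rw [hz] at hdet2
      exact hs1 (by nlinarith [hdet2])
    have hc1 : c1 = 0 := by
      have : (m1*m4 - m2*m3) * c1 = 0 := by linear_combination (m4/4) * e3 + (m3/4) * e4
      exact (mul_eq_zero.mp this).resolve_left hdet
    have hc2 : c2 = 0 := by
      have : (m1*m4 - m2*m3) * c2 = 0 := by linear_combination (-m1/4) * e4 - (m2/4) * e3
      exact (mul_eq_zero.mp this).resolve_left hdet
    exact hc ⟨hc1, hc2⟩
  have hdeg : P.natDegree ≤ 4 := by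
    rw [hP]; compute_degree
  have hcard : P.roots.toFinset.toList.length ≤ 4 := by
    calc P.roots.toFinset.toList.length = P.roots.toFinset.card := Finset.length_toList _
    _ ≤ Multiset.card P.roots := Multiset.toFinset_card_le _
    _ ≤ P.natDegree := Polynomial.card_roots' P
    _ ≤ 4 := hdeg
  obtain ⟨z1, z2, z3, z4, hz⟩ := list_cover _ hcard
  refine ⟨((z1 + z1⁻¹)/2, (z1 - z1⁻¹)/(2*Complex.I)), ((z2 + z2⁻¹)/2, (z2 - z2⁻¹)/(2*Complex.I)),
          ((z3 + z3⁻¹)/2, (z3 - z3⁻¹)/(2*Complex.I)), ((z4 + z4⁻¹)/2, (z4 - z4⁻¹)/(2*Complex.I)), ?_⟩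
  intro x y hcirc hQ
  set u : ℂ := x + Complex.I * y with hu
  have hmul : u * (x - Complex.I * y) = 1 := by
    rw [hu]
    linear_combination hcirc - y^2 * Complex.I_sq
  have hu0 : u ≠ 0 := left_ne_zero_of_mul_eq_one hmul
  have hinv : u⁻¹ = x - Complex.I * y := inv_eq_of_mul_eq_one_right hmul
  have heval : P.eval u = 0 := by
    rw [hP]
    simp only [eval_add, eval_mul, eval_pow, eval_C, eval_X, ha4, ha3, ha2, ha1, ha0]
    push_cast
    rw [hu]
    linear_combination (4*(x + Complex.I*y)^2) * hQ + (4*(m4:ℂ)*(c2:ℂ)*y + -4*(m4:ℂ)*(c2:ℂ)*x*Complex.I + 1*(m4:ℂ)^2 + 3*(m4:ℂ)^2*y^2 + -4*(m4:ℂ)^2*x*y*Complex.I + -1*(m4:ℂ)^2*x^2 + -4*(m3:ℂ)*(c2:ℂ)*y*Complex.I + -4*(m3:ℂ)*(c2:ℂ)*x + -2*(m3:ℂ)*(m4:ℂ)*Complex.I + -2*(m3:ℂ)*(m4:ℂ)*y^2*Complex.I + -2*(m3:ℂ)*(m4:ℂ)*x^2*Complex.I + -1*(m3:ℂ)^2 +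 1*(m3:ℂ)^2*y^2 + -4*(m3:ℂ)^2*x*y*Complex.I + -3*(m3:ℂ)^2*x^2 + 4*(m2:ℂ)*(c1:ℂ)*y + -4*(m2:ℂ)*(c1:ℂ)*x*Complex.I + 1*(m2:ℂ)^2 + 3*(m2:ℂ)^2*y^2 + -4*(m2:ℂ)^2*x*y*Complex.I + -1*(m2:ℂ)^2*x^2 + -4*(m1:ℂ)*(c1:ℂ)*y*Complex.I + -4*(m1:ℂ)*(c1:ℂ)*x + -2*(m1:ℂ)*(m2:ℂ)*Complex.I + -2*(m1:ℂ)*(m2:ℂ)*y^2*Complex.I + -2*(m1:ℂ)*(m2:ℂ)*x^2*Complex.I + -1*(m1:ℂ)^2 + 1*(m1:ℂ)^2*y^2 + -4*(m1:ℂ)^2*x*y*Complex.I + -3*(m1:ℂ)^2*x^2) * hcirc + (4*(m4:ℂ)*(c2:ℂ)*y + -4*(m4:ℂ)*(c2:ℂ)*y^3 + -4*(m4:ℂ)*(c2:ℂ)*y^3*Complex.I^2 + -12*(m4:ℂ)*(c2:ℂ)*x*y^2*Complex.I + -12*(m4:ℂ)*(c2:ℂ)*x^2*y + 2*(m4:ℂ)^2*y^2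 + -3*(m4:ℂ)^2*y^4 + -1*(m4:ℂ)^2*y^4*Complex.I^2 + -4*(m4:ℂ)^2*x*y^3*Complex.I + -6*(m4:ℂ)^2*x^2*y^2 + 4*(m3:ℂ)*(c2:ℂ)*y^3*Complex.I + 4*(m3:ℂ)*(c2:ℂ)*x*y^2 + 2*(m3:ℂ)*(m4:ℂ)*y^4*Complex.I + -2*(m3:ℂ)*(m4:ℂ)*y^4*Complex.I^3 + -8*(m3:ℂ)*(m4:ℂ)*x*y^3*Complex.I^2 + -12*(m3:ℂ)*(m4:ℂ)*x^2*y^2*Complex.I + -8*(m3:ℂ)*(m4:ℂ)*x^3*y + 2*(m3:ℂ)^2*y^2 + -1*(m3:ℂ)^2*y^4 + 1*(m3:ℂ)^2*y^4*Complex.I^2 + 4*(m3:ℂ)^2*x*y^3*Complex.I + 2*(m3:ℂ)^2*x^2*y^2 + 4*(m2:ℂ)*(c1:ℂ)*y + -4*(m2:ℂ)*(c1:ℂ)*y^3 + -4*(m2:ℂ)*(c1:ℂ)*y^3*Complex.I^2 + -12*(m2:ℂ)*(c1:ℂ)*x*y^2*Complex.I + -12*(m2:ℂ)*(c1:ℂ)*x^2*y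 + 2*(m2:ℂ)^2*y^2 + -3*(m2:ℂ)^2*y^4 + -1*(m2:ℂ)^2*y^4*Complex.I^2 + -4*(m2:ℂ)^2*x*y^3*Complex.I + -6*(m2:ℂ)^2*x^2*y^2 + 4*(m1:ℂ)*(c1:ℂ)*y^3*Complex.I + 4*(m1:ℂ)*(c1:ℂ)*x*y^2 + 2*(m1:ℂ)*(m2:ℂ)*y^4*Complex.I + -2*(m1:ℂ)*(m2:ℂ)*y^4*Complex.I^3 + -8*(m1:ℂ)*(m2:ℂ)*x*y^3*Complex.I^2 + -12*(m1:ℂ)*(m2:ℂ)*x^2*y^2*Complex.I + -8*(m1:ℂ)*(m2:ℂ)*x^3*y + 2*(m1:ℂ)^2*y^2 + -1*(m1:ℂ)^2*y^4 + 1*(m1:ℂ)^2*y^4*Complex.I^2 + 4*(m1:ℂ)^2*x*y^3*Complex.I + 2*(m1:ℂ)^2*x^2*y^2) * Complex.I_sq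
  have hmem : u ∈ P.roots.toFinset.toList := by
    rw [Finset.mem_toList, Multiset.mem_toFinset, Polynomial.mem_roots hP0]
    exact heval
  have hgu : (x, y) = ((u + u⁻¹)/2, (u - u⁻¹)/(2*Complex.I)) := by
    rw [hinv, hu]
    have hI : (2 : ℂ) * Complex.I ≠ 0 := by
      simp [Complex.I_ne_zero]
    refine Prod.ext ?_ ?_ <;> simp only
    · ring
    · rw [eq_div_iff hI]; ring
  rcases hz u hmem with h | h | h | h <;> rw [hgu, h] <;> tauto

/-- Two distinct curves `γ_{pq}` and `γ_{p'q'}` in `ℂ⁴` intersect in at most four points,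
provided no coordinate vanishes and `A_{pq}, A_{p'q'} ≠ 0`. -/
theorem quadCurves_intersect_in_at_most_four_points (p q p' q' : ℝ × ℝ)
    (hpx : p.1 ≠ 0) (hpy : p.2 ≠ 0) (hqx : q.1 ≠ 0) (hqy : q.2 ≠ 0)
    (hpx' : p'.1 ≠ 0) (hpy' : p'.2 ≠ 0) (hqx' : q'.1 ≠ 0) (hqy' : q'.2 ≠ 0)
    (hA : (p.1 ^ 2 + p.2 ^ 2 - q.1 ^ 2 - q.2 ^ 2) / 2 ≠ 0)
    (hA' : (p'.1 ^ 2 + p'.2 ^ 2 - q'.1 ^ 2 - q'.2 ^ 2) / 2 ≠ 0)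
    (hne : (p, q) ≠ (p', q')) :
    ∃ v₁ v₂ v₃ v₄ : ℂ × ℂ × ℂ × ℂ,
      quadCurve p q ∩ quadCurve p' q' ⊆ {v₁, v₂, v₃, v₄} := by
  obtain ⟨px, py⟩ := p
  obtain ⟨qx, qy⟩ := q
  obtain ⟨px', py'⟩ := p'
  obtain ⟨qx', qy'⟩ := q'
  simp only at hpx hpy hqx hqy hpx' hpy' hqx' hqy' hA hA'
  have hpxC : (px : ℂ) ≠ 0 := Complex.ofReal_ne_zero.mpr hpx
  have hqxC : (qx : ℂ) ≠ 0 := Complex.ofReal_ne_zero.mpr hqx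
  by_cases hdp : px * py' - py * px' = 0
  · by_cases hdq : qx * qy' - qy * qx' = 0
    · -- both determinants vanish : p' = μ p, q' = λ q
      have cpx' : (px' : ℂ) = ((px'/px : ℝ) : ℂ) * (px : ℂ) := by
        push_cast
        rw [div_mul_eq_mul_div, mul_div_assoc, div_self hpxC, mul_one]
      have rpy' : py' * px = px' * py := by linear_combination hdp
      have cpy' : (py' : ℂ) = ((px'/px : ℝ) : ℂ) * (py : ℂ) := by
        push_cast
        rw [div_mul_eq_mul_div, eq_div_iff hpxC]
        exact_mod_cast rpy'
      have cqx' : (qx' : ℂ) = ((qx'/qx : ℝ) : ℂ) * (qx : ℂ) := by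
        push_cast
        rw [div_mul_eq_mul_div, mul_div_assoc, div_self hqxC, mul_one]
      have rqy' : qy' * qx = qx' * qy := by linear_combination hdq
      have cqy' : (qy' : ℂ) = ((qx'/qx : ℝ) : ℂ) * (qy : ℂ) := by
        push_cast
        rw [div_mul_eq_mul_div, eq_div_iff hqxC]
        exact_mod_cast rqy'
      by_cases hml : px'/px = qx'/qx
      · -- identical directions : contradiction with hne (or empty intersection)
        refine ⟨0, 0, 0, 0, ?_⟩
        rintro ⟨ax, ay, bx, b2⟩ hv
        exfalso
        obtain ⟨⟨h1, ha, hb⟩, h2, -, -⟩ := hv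
        simp only at h1 h2 ha hb
        rw [cpx', cpy', cqx', cqy', ← hml] at h2
        have hAc : ((px'^2 + py'^2 - qx'^2 - qy'^2)/2 : ℝ) = (px'/px) * ((px^2 + py^2 - qx^2 - qy^2)/2 : ℝ) := by
          have key : (((px'^2 + py'^2 - qx'^2 - qy'^2)/2 : ℝ) : ℂ) =
              ((px'/px : ℝ) : ℂ) * (((px^2 + py^2 - qx^2 - qy^2)/2 : ℝ) : ℂ) := by
            push_cast at h1 h2 ⊢
            linear_combination ((px' : ℂ)/(px : ℂ)) * h1 - h2
          exact_mod_cast key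
        have hA2 : ((px'^2 + py'^2 - qx'^2 - qy'^2)/2 : ℝ) = (px'/px)^2 * ((px^2 + py^2 - qx^2 - qy^2)/2 : ℝ) := by
          have e1 : px' = (px'/px) * px := by field_simp
          have e2 : py' = (px'/px) * py := by
            rw [div_mul_eq_mul_div, eq_div_iff hpx]; exact rpy'
          have e3 : qx' = (px'/px) * qx := by
            rw [hml, div_mul_eq_mul_div, eq_div_iff hqx]
            try ring
          have e4 : qy' = (px'/px) * qy := by
            rw [hml, div_mul_eq_mul_div, eq_div_iff hqx]
            try exact rqy'
          linear_combination ((px' + (px'/px) * px)/2) * e1 + ((py' + (px'/px) * py)/2) * e2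
            - ((qx' + (px'/px) * qx)/2) * e3 - ((qy' + (px'/px) * qy)/2) * e4
        have hμ0 : px'/px ≠ 0 := div_ne_zero hpx' hpx
        have hμ1 : px'/px = 1 := by
          have key : (px'/px) * ((px'/px) - 1) * ((px^2 + py^2 - qx^2 - qy^2)/2) = 0 := by
            linear_combination hAc - hA2
          rcases mul_eq_zero.mp key with h | h
          · rcases mul_eq_zero.mp h with h' | h'
            · exact absurd h' hμ0
            · linarith
          · exact absurd h hA
        apply hne
        have e1 : px' = px := by
          rw [div_eq_one_iff_eq hpx] at hμ1; exact hμ1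
        have e3 : qx' = qx := by
          have := hml; rw [hμ1, eq_comm, div_eq_one_iff_eq hqx] at this; exact this
        have e2 : py' = py := by
          have h' : py' * px = py * px := by rw [rpy', e1]; ring
          exact mul_right_cancel₀ hpx h'
        have e4 : qy' = qy := by
          have h' : qy' * qx = qy * qx := by rw [rqy', e3]; ring
          exact mul_right_cancel₀ hqx h'
        simp [Prod.ext_iff, e1, e2, e3, e4]
      · -- p'=μp, q'=λq with μ ≠ λ : both circles are cut by fixed lines
        obtain ⟨wa1, wa2, Ha⟩ := lem2 px py hpx hpy
          (((((px'^2 + py'^2 - qx'^2 - qy'^2)/2) - (px'/px) * ((px^2 + py^2 - qx^2 - qy^2)/2))/((px'/px) - (qx'/qx))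
            + (px^2 + py^2 - qx^2 - qy^2)/2 : ℝ) : ℂ)
        obtain ⟨wb1, wb2, Hb⟩ := lem2 qx qy hqx hqy
          ((((((px'^2 + py'^2 - qx'^2 - qy'^2)/2) - (px'/px) * ((px^2 + py^2 - qx^2 - qy^2)/2))/((px'/px) - (qx'/qx)) : ℝ)) : ℂ)
        refine ⟨(wa1.1, wa1.2, wb1.1, wb1.2), (wa1.1, wa1.2, wb2.1, wb2.2),
                (wa2.1, wa2.2, wb1.1, wb1.2), (wa2.1, wa2.2, wb2.1, wb2.2), ?_⟩
        rintro ⟨ax, ay, bx, b2⟩ hv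
        obtain ⟨⟨h1, ha, hb⟩, h2, -, -⟩ := hv
        simp only at h1 h2 ha hb
        rw [cpx', cpy', cqx', cqy'] at h2
        have hsub : ((px' : ℂ)/(px : ℂ)) - ((qx' : ℂ)/(qx : ℂ)) ≠ 0 := by
          have key : ((px'/px - qx'/qx : ℝ) : ℂ) ≠ 0 := by
            rw [ne_eq, Complex.ofReal_eq_zero, sub_eq_zero]; exact hml
          push_cast at key; exact key
        have hbq : bx * (qx : ℂ) + b2 * (qy : ℂ) =
            ((((((px'^2 + py'^2 - qx'^2 - qy'^2)/2) - (px'/px) * ((px^2 + py^2 - qx^2 - qy^2)/2))/((px'/px) - (qx'/qx)) : ℝ)) : ℂ) := by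
          push_cast at h1 h2 ⊢
          rw [eq_div_iff hsub]
          linear_combination h2 - ((px' : ℂ)/(px : ℂ)) * h1
        have hap : ax * (px : ℂ) + ay * (py : ℂ) =
            (((((px'^2 + py'^2 - qx'^2 - qy'^2)/2) - (px'/px) * ((px^2 + py^2 - qx^2 - qy^2)/2))/((px'/px) - (qx'/qx))
              + (px^2 + py^2 - qx^2 - qy^2)/2 : ℝ) : ℂ) := by
          push_cast at h1 hbq ⊢
          linear_combination h1 + hbq
        have HA := Ha ax ay ha hap
        have HB := Hb bx b2 hb hbq
        simp only [Set.mem_insert_iff, Set.mem_singleton_iff]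
        rcases HA with hA1 | hA1 <;> rcases HB with hB1 | hB1
        · exact Or.inl (by rw [show ax = wa1.1 from congrArg Prod.fst hA1,
            show ay = wa1.2 from congrArg Prod.snd hA1,
            show bx = wb1.1 from congrArg Prod.fst hB1,
            show b2 = wb1.2 from congrArg Prod.snd hB1])
        · exact Or.inr (Or.inl (by rw [show ax = wa1.1 from congrArg Prod.fst hA1,
            show ay = wa1.2 from congrArg Prod.snd hA1,
            show bx = wb2.1 from congrArg Prod.fst hB1,
            show b2 = wb2.2 from congrArg Prod.snd hB1]))
        · exact Or.inr (Or.inr (Or.inl (by rw [show ax = wa2.1 from congrArg Prod.fst hA1,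
            show ay = wa2.2 from congrArg Prod.snd hA1,
            show bx = wb1.1 from congrArg Prod.fst hB1,
            show b2 = wb1.2 from congrArg Prod.snd hB1])))
        · exact Or.inr (Or.inr (Or.inr (by rw [show ax = wa2.1 from congrArg Prod.fst hA1,
            show ay = wa2.2 from congrArg Prod.snd hA1,
            show bx = wb2.1 from congrArg Prod.fst hB1,
            show b2 = wb2.2 from congrArg Prod.snd hB1])))
    · -- dq ≠ 0 : solve b in terms of a, two conics in (ax, ay)
      have hdqC : (qx : ℂ) * (qy' : ℂ) - (qy : ℂ) * (qx' : ℂ) ≠ 0 := by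
        have : ((qx*qy' - qy*qx' : ℝ) : ℂ) ≠ 0 := Complex.ofReal_ne_zero.mpr hdq
        push_cast at this; exact this
      have hM : ¬((qy'*px - qy*px')/(qx*qy' - qy*qx') = 0 ∧ (qx*px' - qx'*px)/(qx*qy' - qy*qx') = 0) := by
        rintro ⟨u1, u3⟩
        rw [_root_.div_eq_zero_iff] at u1 u3
        replace u1 := u1.resolve_right hdq
        replace u3 := u3.resolve_right hdq
        have key : px * (qx*qy' - qy*qx') = 0 := by linear_combination qx * u1 + qy * u3
        rcases mul_eq_zero.mp key with h | h
        exacts [absurd h hpx, hdq h]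
      have hc : ¬((qy*((px'^2 + py'^2 - qx'^2 - qy'^2)/2) - qy'*((px^2 + py^2 - qx^2 - qy^2)/2))/(qx*qy' - qy*qx') = 0 ∧
          (qx'*((px^2 + py^2 - qx^2 - qy^2)/2) - qx*((px'^2 + py'^2 - qx'^2 - qy'^2)/2))/(qx*qy' - qy*qx') = 0) := by
        rintro ⟨w1, w2⟩
        rw [_root_.div_eq_zero_iff] at w1 w2
        replace w1 := w1.resolve_right hdq
        replace w2 := w2.resolve_right hdq
        have key : ((px^2 + py^2 - qx^2 - qy^2)/2) * (qx*qy' - qy*qx') = 0 := by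
          linear_combination (-qx) * w1 - qy * w2
        rcases mul_eq_zero.mp key with h | h
        exacts [hA h, absurd h hdq]
      obtain ⟨w1, w2, w3, w4, H⟩ := core_s12
        ((qy'*px - qy*px')/(qx*qy' - qy*qx')) ((qy'*py - qy*py')/(qx*qy' - qy*qx'))
        ((qx*px' - qx'*px)/(qx*qy' - qy*qx')) ((qx*py' - qx'*py)/(qx*qy' - qy*qx'))
        ((qy*((px'^2 + py'^2 - qx'^2 - qy'^2)/2) - qy'*((px^2 + py^2 - qx^2 - qy^2)/2))/(qx*qy' - qy*qx'))
        ((qx'*((px^2 + py^2 - qx^2 - qy^2)/2) - qx*((px'^2 + py'^2 - qx'^2 - qy'^2)/2))/(qx*qy' - qy*qx'))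
        hM hc
      refine ⟨(w1.1, w1.2,
          (((qy'*px - qy*px')/(qx*qy' - qy*qx') : ℝ) : ℂ) * w1.1 + (((qy'*py - qy*py')/(qx*qy' - qy*qx') : ℝ) : ℂ) * w1.2 + (((qy*((px'^2 + py'^2 - qx'^2 - qy'^2)/2) - qy'*((px^2 + py^2 - qx^2 - qy^2)/2))/(qx*qy' - qy*qx') : ℝ) : ℂ),
          (((qx*px' - qx'*px)/(qx*qy' - qy*qx') : ℝ) : ℂ) * w1.1 + (((qx*py' - qx'*py)/(qx*qy' - qy*qx') : ℝ) : ℂ) * w1.2 + (((qx'*((px^2 + py^2 - qx^2 - qy^2)/2) - qx*((px'^2 + py'^2 - qx'^2 - qy'^2)/2))/(qx*qy' - qy*qx') : ℝ) : ℂ)),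
        (w2.1, w2.2,
          (((qy'*px - qy*px')/(qx*qy' - qy*qx') : ℝ) : ℂ) * w2.1 + (((qy'*py - qy*py')/(qx*qy' - qy*qx') : ℝ) : ℂ) * w2.2 + (((qy*((px'^2 + py'^2 - qx'^2 - qy'^2)/2) - qy'*((px^2 + py^2 - qx^2 - qy^2)/2))/(qx*qy' - qy*qx') : ℝ) : ℂ),
          (((qx*px' - qx'*px)/(qx*qy' - qy*qx') : ℝ) : ℂ) * w2.1 + (((qx*py' - qx'*py)/(qx*qy' - qy*qx') : ℝ) : ℂ) * w2.2 + (((qx'*((px^2 + py^2 - qx^2 - qy^2)/2) - qx*((px'^2 + py'^2 - qx'^2 - qy'^2)/2))/(qx*qy' - qy*qx') : ℝ) : ℂ)),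
        (w3.1, w3.2,
          (((qy'*px - qy*px')/(qx*qy' - qy*qx') : ℝ) : ℂ) * w3.1 + (((qy'*py - qy*py')/(qx*qy' - qy*qx') : ℝ) : ℂ) * w3.2 + (((qy*((px'^2 + py'^2 - qx'^2 - qy'^2)/2) - qy'*((px^2 + py^2 - qx^2 - qy^2)/2))/(qx*qy' - qy*qx') : ℝ) : ℂ),
          (((qx*px' - qx'*px)/(qx*qy' - qy*qx') : ℝ) : ℂ) * w3.1 + (((qx*py' - qx'*py)/(qx*qy' - qy*qx') : ℝ) : ℂ) * w3.2 + (((qx'*((px^2 + py^2 - qx^2 - qy^2)/2) - qx*((px'^2 + py'^2 - qx'^2 - qy'^2)/2))/(qx*qy' - qy*qx') : ℝ) : ℂ)),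
        (w4.1, w4.2,
          (((qy'*px - qy*px')/(qx*qy' - qy*qx') : ℝ) : ℂ) * w4.1 + (((qy'*py - qy*py')/(qx*qy' - qy*qx') : ℝ) : ℂ) * w4.2 + (((qy*((px'^2 + py'^2 - qx'^2 - qy'^2)/2) - qy'*((px^2 + py^2 - qx^2 - qy^2)/2))/(qx*qy' - qy*qx') : ℝ) : ℂ),
          (((qx*px' - qx'*px)/(qx*qy' - qy*qx') : ℝ) : ℂ) * w4.1 + (((qx*py' - qx'*py)/(qx*qy' - qy*qx') : ℝ) : ℂ) * w4.2 + (((qx'*((px^2 + py^2 - qx^2 - qy^2)/2) - qx*((px'^2 + py'^2 - qx'^2 - qy'^2)/2))/(qx*qy' - qy*qx') : ℝ) : ℂ)), ?_⟩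
      rintro ⟨ax, ay, bx, b2⟩ hv
      obtain ⟨⟨h1, ha, hb⟩, h2, -, -⟩ := hv
      simp only at h1 h2 ha hb
      have hbx : bx = (((qy'*px - qy*px')/(qx*qy' - qy*qx') : ℝ) : ℂ) * ax + (((qy'*py - qy*py')/(qx*qy' - qy*qx') : ℝ) : ℂ) * ay + (((qy*((px'^2 + py'^2 - qx'^2 - qy'^2)/2) - qy'*((px^2 + py^2 - qx^2 - qy^2)/2))/(qx*qy' - qy*qx') : ℝ) : ℂ) := by
        push_cast
        rw [div_mul_eq_mul_div, div_mul_eq_mul_div, ← add_div, ← add_div,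
          eq_div_iff hdqC]
        push_cast at h1 h2
        linear_combination (qy : ℂ) * h2 - (qy' : ℂ) * h1
      have hby : b2 = (((qx*px' - qx'*px)/(qx*qy' - qy*qx') : ℝ) : ℂ) * ax + (((qx*py' - qx'*py)/(qx*qy' - qy*qx') : ℝ) : ℂ) * ay + (((qx'*((px^2 + py^2 - qx^2 - qy^2)/2) - qx*((px'^2 + py'^2 - qx'^2 - qy'^2)/2))/(qx*qy' - qy*qx') : ℝ) : ℂ) := by
        push_cast
        rw [div_mul_eq_mul_div, div_mul_eq_mul_div, ← add_div, ← add_div,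
          eq_div_iff hdqC]
        push_cast at h1 h2
        linear_combination (qx' : ℂ) * h1 - (qx : ℂ) * h2
      have hQ : ((((qy'*px - qy*px')/(qx*qy' - qy*qx') : ℝ) : ℂ) * ax + (((qy'*py - qy*py')/(qx*qy' - qy*qx') : ℝ) : ℂ) * ay + (((qy*((px'^2 + py'^2 - qx'^2 - qy'^2)/2) - qy'*((px^2 + py^2 - qx^2 - qy^2)/2))/(qx*qy' - qy*qx') : ℝ) : ℂ)) ^ 2 +
          ((((qx*px' - qx'*px)/(qx*qy' - qy*qx') : ℝ) : ℂ) * ax + (((qx*py' - qx'*py)/(qx*qy' - qy*qx') : ℝ) : ℂ) * ay + (((qx'*((px^2 + py^2 - qx^2 - qy^2)/2) - qx*((px'^2 + py'^2 - qx'^2 - qy'^2)/2))/(qx*qy' - qy*qx') : ℝ) : ℂ)) ^ 2 = 1 := by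
        rw [← hbx, ← hby]; exact hb
      simp only [Set.mem_insert_iff, Set.mem_singleton_iff]
      rcases H ax ay ha hQ with h | h | h | h
      · refine Or.inl ?_
        rw [show ax = w1.1 from congrArg Prod.fst h, show ay = w1.2 from congrArg Prod.snd h] at hbx hby
        rw [show ax = w1.1 from congrArg Prod.fst h, show ay = w1.2 from congrArg Prod.snd h]
        exact Prod.ext rfl (Prod.ext rfl (Prod.ext hbx hby))
      · refine Or.inr (Or.inl ?_)
        rw [show ax = w2.1 from congrArg Prod.fst h, show ay = w2.2 from congrArg Prod.snd h] at hbx hby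
        rw [show ax = w2.1 from congrArg Prod.fst h, show ay = w2.2 from congrArg Prod.snd h]
        exact Prod.ext rfl (Prod.ext rfl (Prod.ext hbx hby))
      · refine Or.inr (Or.inr (Or.inl ?_))
        rw [show ax = w3.1 from congrArg Prod.fst h, show ay = w3.2 from congrArg Prod.snd h] at hbx hby
        rw [show ax = w3.1 from congrArg Prod.fst h, show ay = w3.2 from congrArg Prod.snd h]
        exact Prod.ext rfl (Prod.ext rfl (Prod.ext hbx hby))
      · refine Or.inr (Or.inr (Or.inr ?_))
        rw [show ax = w4.1 from congrArg Prod.fst h, show ay = w4.2 from congrArg Prod.snd h] at hbx hby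
        rw [show ax = w4.1 from congrArg Prod.fst h, show ay = w4.2 from congrArg Prod.snd h]
        exact Prod.ext rfl (Prod.ext rfl (Prod.ext hbx hby))
  · -- dp ≠ 0 : solve a in terms of b, two conics in (bx, b2)
    have hdpC : (px : ℂ) * (py' : ℂ) - (py : ℂ) * (px' : ℂ) ≠ 0 := by
      have : ((px*py' - py*px' : ℝ) : ℂ) ≠ 0 := Complex.ofReal_ne_zero.mpr hdp
      push_cast at this; exact this
    have hM : ¬((py'*qx - py*qx')/(px*py' - py*px') = 0 ∧ (px*qx' - px'*qx)/(px*py' - py*px') = 0) := by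
      rintro ⟨u1, u3⟩
      rw [_root_.div_eq_zero_iff] at u1 u3
      replace u1 := u1.resolve_right hdp
      replace u3 := u3.resolve_right hdp
      have key : qx * (px*py' - py*px') = 0 := by linear_combination px * u1 + py * u3
      rcases mul_eq_zero.mp key with h | h
      exacts [absurd h hqx, hdp h]
    have hc : ¬((py'*((px^2 + py^2 - qx^2 - qy^2)/2) - py*((px'^2 + py'^2 - qx'^2 - qy'^2)/2))/(px*py' - py*px') = 0 ∧
        (px*((px'^2 + py'^2 - qx'^2 - qy'^2)/2) - px'*((px^2 + py^2 - qx^2 - qy^2)/2))/(px*py' - py*px') = 0) := by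
      rintro ⟨w1, w2⟩
      rw [_root_.div_eq_zero_iff] at w1 w2
      replace w1 := w1.resolve_right hdp
      replace w2 := w2.resolve_right hdp
      have key : ((px^2 + py^2 - qx^2 - qy^2)/2) * (px*py' - py*px') = 0 := by
        linear_combination px * w1 + py * w2
      rcases mul_eq_zero.mp key with h | h
      exacts [hA h, absurd h hdp]
    obtain ⟨w1, w2, w3, w4, H⟩ := core_s12
      ((py'*qx - py*qx')/(px*py' - py*px')) ((py'*qy - py*qy')/(px*py' - py*px'))
      ((px*qx' - px'*qx)/(px*py' - py*px')) ((px*qy' - px'*qy)/(px*py' - py*px'))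
      ((py'*((px^2 + py^2 - qx^2 - qy^2)/2) - py*((px'^2 + py'^2 - qx'^2 - qy'^2)/2))/(px*py' - py*px'))
      ((px*((px'^2 + py'^2 - qx'^2 - qy'^2)/2) - px'*((px^2 + py^2 - qx^2 - qy^2)/2))/(px*py' - py*px'))
      hM hc
    refine ⟨((((py'*qx - py*qx')/(px*py' - py*px') : ℝ) : ℂ) * w1.1 + (((py'*qy - py*qy')/(px*py' - py*px') : ℝ) : ℂ) * w1.2 + (((py'*((px^2 + py^2 - qx^2 - qy^2)/2) - py*((px'^2 + py'^2 - qx'^2 - qy'^2)/2))/(px*py' - py*px') : ℝ) : ℂ),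
        (((px*qx' - px'*qx)/(px*py' - py*px') : ℝ) : ℂ) * w1.1 + (((px*qy' - px'*qy)/(px*py' - py*px') : ℝ) : ℂ) * w1.2 + (((px*((px'^2 + py'^2 - qx'^2 - qy'^2)/2) - px'*((px^2 + py^2 - qx^2 - qy^2)/2))/(px*py' - py*px') : ℝ) : ℂ),
        w1.1, w1.2),
      ((((py'*qx - py*qx')/(px*py' - py*px') : ℝ) : ℂ) * w2.1 + (((py'*qy - py*qy')/(px*py' - py*px') : ℝ) : ℂ) * w2.2 + (((py'*((px^2 + py^2 - qx^2 - qy^2)/2) - py*((px'^2 + py'^2 - qx'^2 - qy'^2)/2))/(px*py' - py*px') : ℝ) : ℂ),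
        (((px*qx' - px'*qx)/(px*py' - py*px') : ℝ) : ℂ) * w2.1 + (((px*qy' - px'*qy)/(px*py' - py*px') : ℝ) : ℂ) * w2.2 + (((px*((px'^2 + py'^2 - qx'^2 - qy'^2)/2) - px'*((px^2 + py^2 - qx^2 - qy^2)/2))/(px*py' - py*px') : ℝ) : ℂ),
        w2.1, w2.2),
      ((((py'*qx - py*qx')/(px*py' - py*px') : ℝ) : ℂ) * w3.1 + (((py'*qy - py*qy')/(px*py' - py*px') : ℝ) : ℂ) * w3.2 + (((py'*((px^2 + py^2 - qx^2 - qy^2)/2) - py*((px'^2 + py'^2 - qx'^2 - qy'^2)/2))/(px*py' - py*px') : ℝ) : ℂ),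
        (((px*qx' - px'*qx)/(px*py' - py*px') : ℝ) : ℂ) * w3.1 + (((px*qy' - px'*qy)/(px*py' - py*px') : ℝ) : ℂ) * w3.2 + (((px*((px'^2 + py'^2 - qx'^2 - qy'^2)/2) - px'*((px^2 + py^2 - qx^2 - qy^2)/2))/(px*py' - py*px') : ℝ) : ℂ),
        w3.1, w3.2),
      ((((py'*qx - py*qx')/(px*py' - py*px') : ℝ) : ℂ) * w4.1 + (((py'*qy - py*qy')/(px*py' - py*px') : ℝ) : ℂ) * w4.2 + (((py'*((px^2 + py^2 - qx^2 - qy^2)/2) - py*((px'^2 + py'^2 - qx'^2 - qy'^2)/2))/(px*py' - py*px') : ℝ) : ℂ),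
        (((px*qx' - px'*qx)/(px*py' - py*px') : ℝ) : ℂ) * w4.1 + (((px*qy' - px'*qy)/(px*py' - py*px') : ℝ) : ℂ) * w4.2 + (((px*((px'^2 + py'^2 - qx'^2 - qy'^2)/2) - px'*((px^2 + py^2 - qx^2 - qy^2)/2))/(px*py' - py*px') : ℝ) : ℂ),
        w4.1, w4.2), ?_⟩
    rintro ⟨ax, ay, bx, b2⟩ hv
    obtain ⟨⟨h1, ha, hb⟩, h2, -, -⟩ := hv
    simp only at h1 h2 ha hb
    have hax : ax = (((py'*qx - py*qx')/(px*py' - py*px') : ℝ) : ℂ) * bx + (((py'*qy - py*qy')/(px*py' - py*px') : ℝ) : ℂ) * b2 + (((py'*((px^2 + py^2 - qx^2 - qy^2)/2) - py*((px'^2 + py'^2 - qx'^2 - qy'^2)/2))/(px*py' - py*px') : ℝ) : ℂ) := by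
      push_cast
      rw [div_mul_eq_mul_div, div_mul_eq_mul_div, ← add_div, ← add_div,
        eq_div_iff hdpC]
      push_cast at h1 h2
      linear_combination (py' : ℂ) * h1 - (py : ℂ) * h2
    have hay : ay = (((px*qx' - px'*qx)/(px*py' - py*px') : ℝ) : ℂ) * bx + (((px*qy' - px'*qy)/(px*py' - py*px') : ℝ) : ℂ) * b2 + (((px*((px'^2 + py'^2 - qx'^2 - qy'^2)/2) - px'*((px^2 + py^2 - qx^2 - qy^2)/2))/(px*py' - py*px') : ℝ) : ℂ) := by
      push_cast
      rw [div_mul_eq_mul_div, div_mul_eq_mul_div, ← add_div, ← add_div,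
        eq_div_iff hdpC]
      push_cast at h1 h2
      linear_combination (px : ℂ) * h2 - (px' : ℂ) * h1
    have hQ : ((((py'*qx - py*qx')/(px*py' - py*px') : ℝ) : ℂ) * bx + (((py'*qy - py*qy')/(px*py' - py*px') : ℝ) : ℂ) * b2 + (((py'*((px^2 + py^2 - qx^2 - qy^2)/2) - py*((px'^2 + py'^2 - qx'^2 - qy'^2)/2))/(px*py' - py*px') : ℝ) : ℂ)) ^ 2 +
        ((((px*qx' - px'*qx)/(px*py' - py*px') : ℝ) : ℂ) * bx + (((px*qy' - px'*qy)/(px*py' - py*px') : ℝ) : ℂ) * b2 + (((px*((px'^2 + py'^2 - qx'^2 - qy'^2)/2) - px'*((px^2 + py^2 - qx^2 - qy^2)/2))/(px*py' - py*px') : ℝ) : ℂ)) ^ 2 = 1 := by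
      rw [← hax, ← hay]; exact ha
    simp only [Set.mem_insert_iff, Set.mem_singleton_iff]
    rcases H bx b2 hb hQ with h | h | h | h
    · refine Or.inl ?_
      rw [show bx = w1.1 from congrArg Prod.fst h, show b2 = w1.2 from congrArg Prod.snd h] at hax hay
      rw [show bx = w1.1 from congrArg Prod.fst h, show b2 = w1.2 from congrArg Prod.snd h]
      exact Prod.ext hax (Prod.ext hay (Prod.ext rfl rfl))
    · refine Or.inr (Or.inl ?_)
      rw [show bx = w2.1 from congrArg Prod.fst h, show b2 = w2.2 from congrArg Prod.snd h] at hax hay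
      rw [show bx = w2.1 from congrArg Prod.fst h, show b2 = w2.2 from congrArg Prod.snd h]
      exact Prod.ext hax (Prod.ext hay (Prod.ext rfl rfl))
    · refine Or.inr (Or.inr (Or.inl ?_))
      rw [show bx = w3.1 from congrArg Prod.fst h, show b2 = w3.2 from congrArg Prod.snd h] at hax hay
      rw [show bx = w3.1 from congrArg Prod.fst h, show b2 = w3.2 from congrArg Prod.snd h]
      exact Prod.ext hax (Prod.ext hay (Prod.ext rfl rfl))
    · refine Or.inr (Or.inr (Or.inr ?_))
      rw [show bx = w4.1 from congrArg Prod.fst h, show b2 = w4.2 from congrArg Prod.snd h] at hax hay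
      rw [show bx = w4.1 from congrArg Prod.fst h, show b2 = w4.2 from congrArg Prod.snd h]
      exact Prod.ext hax (Prod.ext hay (Prod.ext rfl rfl))
end

section
/- Let p, q, p', q' ∈ ℝ² be points all of whose coordinates p_x, p_y, q_x, q_y, p'_x, p'_y, q'_x, q'_y are nonzero, and suppose A_{pq} = (p_x² + p_y² − q_x² − q_y²)/2 ≠ 0 and A_{p'q'} = (p'^2_x + p'^2_y − q'^2_x − q'^2_y)/2 ≠ 0. If the four equations p_x p'_y = p_y p'_x, q_x q'_y = q_y q'_x, p_x q'_x = q_x p'_x, and p_x(p'^2_x + p'^2_y − q'^2_x − q'^2_y) = p'_x(p_x² + p_y² − q_x² − q_y²) all hold, then p = p' and q = q'. -/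
/-- If the four degeneracy conditions of the matrices `M_{pp'}` and `M_{qq'}` hold and
no coordinate vanishes and `A_{pq}, A_{p'q'} ≠ 0`, then `p = p'` and `q = q'`. -/
theorem degenerate_case_forces_equal_pairs (p q p' q' : ℝ × ℝ)
    (hpx : p.1 ≠ 0) (hpy : p.2 ≠ 0) (hqx : q.1 ≠ 0) (hqy : q.2 ≠ 0)
    (hpx' : p'.1 ≠ 0) (hpy' : p'.2 ≠ 0) (hqx' : q'.1 ≠ 0) (hqy' : q'.2 ≠ 0)
    (hA : (p.1 ^ 2 + p.2 ^ 2 - q.1 ^ 2 - q.2 ^ 2) / 2 ≠ 0)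
    (hA' : (p'.1 ^ 2 + p'.2 ^ 2 - q'.1 ^ 2 - q'.2 ^ 2) / 2 ≠ 0)
    (e1 : p.1 * p'.2 = p.2 * p'.1)
    (e2 : q.1 * q'.2 = q.2 * q'.1)
    (e3 : p.1 * q'.1 = q.1 * p'.1)
    (e4 : p.1 * (p'.1 ^ 2 + p'.2 ^ 2 - q'.1 ^ 2 - q'.2 ^ 2) =
            p'.1 * (p.1 ^ 2 + p.2 ^ 2 - q.1 ^ 2 - q.2 ^ 2)) :
    p = p' ∧ q = q' := by
  obtain ⟨px, py⟩ := p
  obtain ⟨qx, qy⟩ := q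
  obtain ⟨px', py'⟩ := p'
  obtain ⟨qx', qy'⟩ := q'
  simp only [Prod.mk.injEq] at *
  set t : ℝ := px / px' with ht
  have hpx1 : px = t * px' := by rw [ht]; field_simp
  have hpy1 : py = t * py' := by
    rw [ht]; field_simp
    linarith [e1]
  have hqx1 : qx = t * qx' := by
    rw [ht]; field_simp
    nlinarith [e3]
  have hqy1 : qy = t * qy' := by
    have : qx' * qy = qx' * (t * qy') := by
      have : qx * qy' = qy * qx' := e2
      rw [hqx1] at this
      nlinarith [this]
    exact mul_left_cancel₀ hqx' this
  have hS' : px' ^ 2 + py' ^ 2 - qx' ^ 2 - qy' ^ 2 ≠ 0 := by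
    intro h; exact hA' (by rw [h]; ring)
  have ht1 : t = 1 := by
    have key : px' * ((px' ^ 2 + py' ^ 2 - qx' ^ 2 - qy' ^ 2) * (t * (t - 1))) = 0 := by
      rw [hpx1, hpy1, hqx1, hqy1] at e4
      ring_nf
      ring_nf at e4
      nlinarith [e4]
    have ht0 : t ≠ 0 := div_ne_zero hpx hpx'
    rcases mul_eq_zero.mp key with h | h
    · exact absurd h hpx'
    rcases mul_eq_zero.mp h with h | h
    · exact absurd h hS'
    rcases mul_eq_zero.mp h with h | h
    · exact absurd h ht0
    · linarith
  rw [ht1, one_mul] at hpx1 hpy1 hqx1 hqy1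
  exact ⟨⟨hpx1, hpy1⟩, ⟨hqx1, hqy1⟩⟩
end

section
/- Let C = {(x,y) ∈ ℂ² : x² + y² = 1} be the complex unit circle, and let T : ℂ² → ℂ² be an affine map, i.e. T(v) = Mv + w for a linear map M : ℂ² → ℂ² and a vector w ∈ ℂ². If T(C) = C (the image of C under T equals C), then T(0,0) = (0,0). -/
/-- An affine map of `ℂ²` whose image of the complex unit circle `{x² + y² = 1}` is
again the complex unit circle must fix the origin. -/
theorem affine_map_preserving_complex_circle_fixes_origin
    (M : (ℂ × ℂ) →ₗ[ℂ] (ℂ × ℂ)) (w : ℂ × ℂ)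
    (h : (fun v : ℂ × ℂ => M v + w) '' {v : ℂ × ℂ | v.1 ^ 2 + v.2 ^ 2 = 1} =
          {v : ℂ × ℂ | v.1 ^ 2 + v.2 ^ 2 = 1}) :
    M (0, 0) + w = (0, 0) := by
  have fwd : ∀ v : ℂ × ℂ, v.1 ^ 2 + v.2 ^ 2 = 1 →
      (M v + w).1 ^ 2 + (M v + w).2 ^ 2 = 1 := by
    intro v hv
    have : M v + w ∈ {v : ℂ × ℂ | v.1 ^ 2 + v.2 ^ 2 = 1} := h ▸ ⟨v, hv, rfl⟩
    exact this
  have key : ∀ v : ℂ × ℂ, v.1 ^ 2 + v.2 ^ 2 = 1 →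
      (M v).1 * w.1 + (M v).2 * w.2 = 0 := by
    intro v hv
    have h1 := fwd v hv
    have h2 := fwd (-v) (by simpa using hv)
    rw [map_neg] at h2
    simp only [Prod.fst_add, Prod.snd_add, Prod.fst_neg, Prod.snd_neg] at h1 h2
    linear_combination (h1 - h2) / 4
  have lin : ∀ v : ℂ × ℂ, (M v).1 * w.1 + (M v).2 * w.2 = 0 := by
    intro v
    have h1 := key (1, 0) (by norm_num)
    have h2 := key (0, 1) (by norm_num)
    have hv : v = v.1 • ((1 : ℂ), (0 : ℂ)) + v.2 • ((0 : ℂ), (1 : ℂ)) := by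
      simp [Prod.ext_iff]
    rw [hv, map_add, map_smul, map_smul]
    simp only [Prod.fst_add, Prod.snd_add, Prod.smul_fst, Prod.smul_snd, smul_eq_mul]
    linear_combination v.1 * h1 + v.2 * h2
  have bwd : ∀ p : ℂ × ℂ, p.1 ^ 2 + p.2 ^ 2 = 1 →
      ∃ u : ℂ × ℂ, M u + w = p := by
    intro p hp
    have : p ∈ (fun v : ℂ × ℂ => M v + w) '' {v : ℂ × ℂ | v.1 ^ 2 + v.2 ^ 2 = 1} :=
      h.symm ▸ hp
    obtain ⟨u, _, hup⟩ := this
    exact ⟨u, hup⟩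
  obtain ⟨a, hA⟩ := bwd (1, 0) (by norm_num)
  obtain ⟨b, hB⟩ := bwd (-1, 0) (by norm_num)
  obtain ⟨c, hC⟩ := bwd (0, 1) (by norm_num)
  have hMa : M a = (1, 0) - w := eq_sub_of_add_eq hA
  have hMb : M b = (-1, 0) - w := eq_sub_of_add_eq hB
  have hMc : M c = (0, 1) - w := eq_sub_of_add_eq hC
  have hu1 : M ((1 / 2 : ℂ) • (a - b)) = (1, 0) := by
    rw [map_smul, map_sub, hMa, hMb]
    ext <;> simp <;> ring
  have hu2 : M ((1 / 2 : ℂ) • (a + b) - c) = (0, -1) := by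
    rw [map_sub, map_smul, map_add, hMa, hMb, hMc]
    ext <;> simp <;> ring
  have hw1 : w.1 = 0 := by
    have := lin ((1 / 2 : ℂ) • (a - b))
    rw [hu1] at this
    simpa using this
  have hw2 : w.2 = 0 := by
    have := lin ((1 / 2 : ℂ) • (a + b) - c)
    rw [hu2] at this
    simpa using this
  have h0 : M (0, 0) = 0 := by
    have : ((0, 0) : ℂ × ℂ) = 0 := rfl
    rw [this, map_zero]
  rw [h0]
  ext <;> simp [hw1, hw2]
end
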